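/- arXiv:1402.3879 — 6 statements merged into one kernel-verified Lean document; each statement's English description precedes it below -/
import Mathlib

section
/- Let 0 < r₁ < r₂ and let κ₁, κ₂ > 0 satisfy κ₁ < 1 and κ₁ + κ₂ > 1. Then ∫₀^{r₁} (r₁ − r)^{−κ₁} (r₂ − r)^{−κ₂} dr ≤ C (r₂ − r₁)^{1 − κ₁ − κ₂}, where the constant can be taken to be C = 1/(1 − κ₁) + 1/(κ₁ + κ₂ − 1). -/
open MeasureTheory Set

lemma lint_one (a b κ : ℝ) (hab : a ≤ b) (hκ0 : 0 < κ) (hκ1 : κ < 1) :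
    ∫⁻ r in Set.Ioo a b, ENNReal.ofReal ((b - r) ^ (-κ)) =
      ENNReal.ofReal ((b - a) ^ (1 - κ) / (1 - κ)) := by
  have hii : IntervalIntegrable (fun r => (b - r) ^ (-κ)) volume a b := by
    have h := (intervalIntegral.intervalIntegrable_rpow' (a := b - a) (b := b - b)
      (show (-1 : ℝ) < -κ by linarith)).comp_sub_left b
    simpa using h
  have hIoo : IntegrableOn (fun r => (b - r) ^ (-κ)) (Set.Ioo a b) := by
    have := (intervalIntegrable_iff_integrableOn_Ioc_of_le hab).mp hii
    exact this.mono_set Set.Ioo_subset_Ioc_self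
  rw [← MeasureTheory.ofReal_integral_eq_lintegral_ofReal hIoo ?_]
  · congr 1
    have h1 : ∫ r in Set.Ioo a b, (b - r) ^ (-κ) = ∫ r in a..b, (b - r) ^ (-κ) := by
      rw [intervalIntegral.integral_of_le hab, MeasureTheory.integral_Ioc_eq_integral_Ioo]
    rw [h1, intervalIntegral.integral_comp_sub_left (fun x => x ^ (-κ)) b,
      integral_rpow (Or.inl (by linarith))]
    rw [sub_self, Real.zero_rpow (by linarith : -κ + 1 ≠ 0)]
    rw [show -κ + 1 = 1 - κ by ring]
    ring
  · filter_upwards [ae_restrict_mem measurableSet_Ioo] with r hr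
    exact Real.rpow_nonneg (by linarith [hr.2]) _

lemma lint_two (a b c κ : ℝ) (hab : a ≤ b) (hbc : b < c) (hκ : 1 < κ) :
    ∫⁻ r in Set.Ioo a b, ENNReal.ofReal ((c - r) ^ (-κ)) ≤
      ENNReal.ofReal ((c - b) ^ (1 - κ) / (κ - 1)) := by
  have hcont : ContinuousOn (fun r : ℝ => (c - r) ^ (-κ)) (Set.uIcc a b) := by
    apply ContinuousOn.rpow_const
    · exact (continuous_const.sub continuous_id).continuousOn
    · intro x hx
      rw [Set.uIcc_of_le hab] at hx
      exact Or.inl (by simp; linarith [hx.2])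
  have hii : IntervalIntegrable (fun r => (c - r) ^ (-κ)) volume a b := hcont.intervalIntegrable
  have hIoo : IntegrableOn (fun r => (c - r) ^ (-κ)) (Set.Ioo a b) := by
    have := (intervalIntegrable_iff_integrableOn_Ioc_of_le hab).mp hii
    exact this.mono_set Set.Ioo_subset_Ioc_self
  rw [← MeasureTheory.ofReal_integral_eq_lintegral_ofReal hIoo ?_]
  · apply ENNReal.ofReal_le_ofReal
    have h1 : ∫ r in Set.Ioo a b, (c - r) ^ (-κ) = ∫ r in a..b, (c - r) ^ (-κ) := by
      rw [intervalIntegral.integral_of_le hab, MeasureTheory.integral_Ioc_eq_integral_Ioo]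
    have h0 : (0 : ℝ) ∉ Set.uIcc (c - b) (c - a) := by
      rw [Set.uIcc_of_le (by linarith)]
      intro hmem
      linarith [hmem.1]
    rw [h1, intervalIntegral.integral_comp_sub_left (fun x => x ^ (-κ)) c,
      integral_rpow (Or.inr ⟨by intro hh; rw [neg_eq_iff_eq_neg] at hh; linarith, h0⟩)]
    have hca : 0 ≤ (c - a) ^ (-κ + 1) := Real.rpow_nonneg (by linarith) _
    rw [show -κ + 1 = 1 - κ by ring] at hca ⊢
    have hden : ((c - a) ^ (1 - κ) - (c - b) ^ (1 - κ)) / (1 - κ)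
        = ((c - b) ^ (1 - κ) - (c - a) ^ (1 - κ)) / (κ - 1) := by
      rw [div_eq_div_iff (by linarith) (by linarith)]; ring
    rw [hden, div_le_div_iff₀ (by linarith) (by linarith)]
    nlinarith [hca]
  · filter_upwards [ae_restrict_mem measurableSet_Ioo] with r hr
    exact Real.rpow_nonneg (by linarith [hr.2]) _

lemma term_near (a r₁ r₂ κ₁ κ₂ : ℝ) (ha : a ≤ r₁) (h12 : r₁ < r₂)
    (hκ₁ : 0 < κ₁) (hκ₁1 : κ₁ < 1) (hκ₂ : 0 < κ₂) (hd : r₁ - a ≤ r₂ - r₁) :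
    ∫⁻ r in Set.Ioo a r₁, ENNReal.ofReal ((r₁ - r) ^ (-κ₁) * (r₂ - r) ^ (-κ₂)) ≤
      ENNReal.ofReal ((r₂ - r₁) ^ (1 - κ₁ - κ₂) * (1 / (1 - κ₁))) := by
  have hδ : 0 < r₂ - r₁ := by linarith
  have step1 : ∫⁻ r in Set.Ioo a r₁, ENNReal.ofReal ((r₁ - r) ^ (-κ₁) * (r₂ - r) ^ (-κ₂)) ≤
      ∫⁻ r in Set.Ioo a r₁,
        ENNReal.ofReal ((r₂ - r₁) ^ (-κ₂)) * ENNReal.ofReal ((r₁ - r) ^ (-κ₁)) := by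
    refine lintegral_mono_ae ?_
    filter_upwards [ae_restrict_mem measurableSet_Ioo] with r hr
    rw [← ENNReal.ofReal_mul (Real.rpow_nonneg hδ.le _)]
    apply ENNReal.ofReal_le_ofReal
    have h1 : (r₂ - r) ^ (-κ₂) ≤ (r₂ - r₁) ^ (-κ₂) :=
      Real.rpow_le_rpow_of_nonpos hδ (by linarith [hr.2]) (by linarith)
    rw [mul_comm]
    exact mul_le_mul_of_nonneg_right h1 (Real.rpow_nonneg (by linarith [hr.2]) _)
  refine step1.trans ?_
  rw [lintegral_const_mul' _ _ ENNReal.ofReal_ne_top, lint_one a r₁ κ₁ ha hκ₁ hκ₁1,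
    ← ENNReal.ofReal_mul (Real.rpow_nonneg hδ.le _)]
  apply ENNReal.ofReal_le_ofReal
  have h2 : (r₁ - a) ^ (1 - κ₁) ≤ (r₂ - r₁) ^ (1 - κ₁) :=
    Real.rpow_le_rpow (by linarith) hd (by linarith)
  have h3 : (r₂ - r₁) ^ (-κ₂) * (r₂ - r₁) ^ (1 - κ₁) = (r₂ - r₁) ^ (1 - κ₁ - κ₂) := by
    rw [← Real.rpow_add hδ]; ring_nf
  have h4 : (r₂ - r₁) ^ (-κ₂) * (r₁ - a) ^ (1 - κ₁) ≤ (r₂ - r₁) ^ (1 - κ₁ - κ₂) := by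
    rw [← h3]; exact mul_le_mul_of_nonneg_left h2 (Real.rpow_nonneg hδ.le _)
  have h5 : (r₂ - r₁) ^ (-κ₂) * ((r₁ - a) ^ (1 - κ₁) / (1 - κ₁)) =
      ((r₂ - r₁) ^ (-κ₂) * (r₁ - a) ^ (1 - κ₁)) * (1 / (1 - κ₁)) := by ring
  rw [h5]
  exact mul_le_mul_of_nonneg_right h4 (one_div_nonneg.mpr (by linarith))

lemma term_far (m r₁ r₂ κ₁ κ₂ : ℝ) (hm : 0 ≤ m) (hm1 : m < r₁) (h12 : r₁ < r₂)
    (hκ₁ : 0 < κ₁) (hκ₂ : 0 < κ₂) (hs : 1 < κ₁ + κ₂) (hd : r₂ - r₁ ≤ r₁ - m) :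
    ∫⁻ r in Set.Ioo 0 m, ENNReal.ofReal ((r₁ - r) ^ (-κ₁) * (r₂ - r) ^ (-κ₂)) ≤
      ENNReal.ofReal ((r₂ - r₁) ^ (1 - κ₁ - κ₂) * (1 / (κ₁ + κ₂ - 1))) := by
  have hδ : 0 < r₂ - r₁ := by linarith
  have step1 : ∫⁻ r in Set.Ioo 0 m, ENNReal.ofReal ((r₁ - r) ^ (-κ₁) * (r₂ - r) ^ (-κ₂)) ≤
      ∫⁻ r in Set.Ioo 0 m, ENNReal.ofReal ((r₁ - r) ^ (-(κ₁ + κ₂))) := by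
    refine lintegral_mono_ae ?_
    filter_upwards [ae_restrict_mem measurableSet_Ioo] with r hr
    apply ENNReal.ofReal_le_ofReal
    have hr1 : 0 < r₁ - r := by linarith [hr.2]
    have h1 : (r₂ - r) ^ (-κ₂) ≤ (r₁ - r) ^ (-κ₂) :=
      Real.rpow_le_rpow_of_nonpos hr1 (by linarith) (by linarith)
    calc (r₁ - r) ^ (-κ₁) * (r₂ - r) ^ (-κ₂)
        ≤ (r₁ - r) ^ (-κ₁) * (r₁ - r) ^ (-κ₂) :=
          mul_le_mul_of_nonneg_left h1 (Real.rpow_nonneg hr1.le _)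
      _ = (r₁ - r) ^ (-(κ₁ + κ₂)) := by rw [← Real.rpow_add hr1]; ring_nf
  refine step1.trans ((lint_two 0 m r₁ (κ₁ + κ₂) hm hm1 hs).trans ?_)
  apply ENNReal.ofReal_le_ofReal
  have h2 : (r₁ - m) ^ (1 - (κ₁ + κ₂)) ≤ (r₂ - r₁) ^ (1 - (κ₁ + κ₂)) :=
    Real.rpow_le_rpow_of_nonpos hδ hd (by linarith)
  rw [show (1 : ℝ) - κ₁ - κ₂ = 1 - (κ₁ + κ₂) by ring, div_eq_mul_one_div]
  exact mul_le_mul_of_nonneg_right h2 (one_div_nonneg.mpr (by linarith))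

/-- Lemma 6.4 (Lemma `lm03`): for `0 < r₁ < r₂`, `0 < κ₁ < 1`, `κ₂ > 0` with `κ₁ + κ₂ > 1`,
`∫₀^{r₁} (r₁ - r)^{-κ₁} (r₂ - r)^{-κ₂} dr ≤ C (r₂ - r₁)^{1 - κ₁ - κ₂}` with
`C = 1/(1 - κ₁) + 1/(κ₁ + κ₂ - 1)`. -/
theorem stmt_0 (r₁ r₂ κ₁ κ₂ : ℝ) (hr₁ : 0 < r₁) (hr₁₂ : r₁ < r₂)
    (hκ₁ : 0 < κ₁) (hκ₂ : 0 < κ₂) (hκ₁1 : κ₁ < 1) (hκsum : 1 < κ₁ + κ₂) :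
    ∫⁻ r in Set.Ioo (0 : ℝ) r₁,
        ENNReal.ofReal ((r₁ - r) ^ (-κ₁) * (r₂ - r) ^ (-κ₂)) ≤
      ENNReal.ofReal
        ((1 / (1 - κ₁) + 1 / (κ₁ + κ₂ - 1)) * (r₂ - r₁) ^ (1 - κ₁ - κ₂)) := by
  have hδ : 0 < r₂ - r₁ := by linarith
  have hC2 : 0 ≤ 1 / (κ₁ + κ₂ - 1) := one_div_nonneg.mpr (by linarith)
  have hrp : 0 ≤ (r₂ - r₁) ^ (1 - κ₁ - κ₂) := Real.rpow_nonneg hδ.le _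
  rcases le_or_gt r₁ (r₂ - r₁) with h | h
  · refine (term_near 0 r₁ r₂ κ₁ κ₂ hr₁.le hr₁₂ hκ₁ hκ₁1 hκ₂ (by linarith)).trans ?_
    apply ENNReal.ofReal_le_ofReal
    nlinarith [mul_nonneg hrp hC2]
  · set m := r₁ - (r₂ - r₁) with hmdef
    have hm0 : 0 < m := by simp [hmdef]; linarith
    have hm1 : m < r₁ := by simp [hmdef]; linarith
    have hsplit : Set.Ioo (0 : ℝ) r₁ = Set.Ioc 0 m ∪ Set.Ioo m r₁ :=
      (Set.Ioc_union_Ioo_eq_Ioo hm0.le hm1).symm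
    have hdisj : Disjoint (Set.Ioc (0 : ℝ) m) (Set.Ioo m r₁) := by
      rw [Set.disjoint_left]
      rintro x ⟨_, h1⟩ ⟨h2, _⟩
      linarith
    rw [hsplit, lintegral_union measurableSet_Ioo hdisj,
      MeasureTheory.setLIntegral_congr (Ioo_ae_eq_Ioc (μ := volume) (a := (0:ℝ)) (b := m)).symm]
    have hT1 := term_far m r₁ r₂ κ₁ κ₂ hm0.le hm1 hr₁₂ hκ₁ hκ₂ hκsum (by simp [hmdef])
    have hT2 := term_near m r₁ r₂ κ₁ κ₂ hm1.le hr₁₂ hκ₁ hκ₁1 hκ₂ (by simp [hmdef])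
    refine (add_le_add hT1 hT2).trans ?_
    rw [← ENNReal.ofReal_add (mul_nonneg hrp hC2) (mul_nonneg hrp (one_div_nonneg.mpr (by linarith)))]
    apply ENNReal.ofReal_le_ofReal
    apply le_of_eq
    ring
end

section
/- Let 0 < r₁ < r₂ ≤ r₃ and let κ₁, κ₂, κ₃ > 0 satisfy κ₁ + κ₂ < 1 and κ₁ + κ₂ + κ₃ > 1. Then ∫₀^{r₁} (r₁ − r)^{−κ₁} (r₂ − r)^{−κ₂} (r₃ − r)^{−κ₃} dr ≤ C (r₃ − r₁)^{1 − κ₁ − κ₂ − κ₃}, where the constant can be taken to be C = 1/(1 − κ₁ − κ₂) + 1/(κ₁ + κ₂ + κ₃ − 1). -/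
open MeasureTheory Set

/-- exact value of `∫ over Ioo lb b of (b - r)^p` for `p > -1`. -/
lemma auxA (b lb p : ℝ) (hlb : lb < b) (hp : -1 < p) :
    ∫⁻ r in Set.Ioo lb b, ENNReal.ofReal ((b - r) ^ p) =
      ENNReal.ofReal ((b - lb) ^ (p + 1) / (p + 1)) := by
  have hii : IntervalIntegrable (fun u : ℝ => u ^ p) volume 0 (b - lb) :=
    intervalIntegral.intervalIntegrable_rpow' hp
  have hii2 : IntervalIntegrable (fun r : ℝ => (b - r) ^ p) volume lb b := by
    have := (hii.comp_sub_left b).symm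
    simpa using this
  have hint : IntegrableOn (fun r : ℝ => (b - r) ^ p) (Set.Ioo lb b) volume :=
    ((intervalIntegrable_iff_integrableOn_Ioc_of_le hlb.le).mp hii2).mono_set Set.Ioo_subset_Ioc_self
  rw [← ofReal_integral_eq_lintegral_ofReal hint]
  · congr 1
    rw [← MeasureTheory.integral_Ioc_eq_integral_Ioo,
      ← intervalIntegral.integral_of_le hlb.le]
    have : (∫ r in lb..b, (b - r) ^ p) = ∫ u in (b - b)..(b - lb), u ^ p :=
      intervalIntegral.integral_comp_sub_left (fun u : ℝ => u ^ p) b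
    rw [this, sub_self, integral_rpow (Or.inl hp),
      Real.zero_rpow (by linarith : p + 1 ≠ 0), sub_zero]
  · filter_upwards [ae_restrict_mem measurableSet_Ioo] with r hr
    exact Real.rpow_nonneg (by linarith [hr.2]) p

/-- exact value of `∫ over Ioc lb ub of (b - r)^p` for `ub < b`, `p ≠ -1`. -/
lemma auxB (b lb ub p : ℝ) (hlb : lb < ub) (hub : ub < b) (hp : p ≠ -1) :
    ∫⁻ r in Set.Ioc lb ub, ENNReal.ofReal ((b - r) ^ p) =
      ENNReal.ofReal (((b - lb) ^ (p + 1) - (b - ub) ^ (p + 1)) / (p + 1)) := by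
  have h0 : (0 : ℝ) ∉ Set.uIcc (b - ub) (b - lb) :=
    Set.notMem_uIcc_of_lt (by linarith) (by linarith)
  have hii : IntervalIntegrable (fun u : ℝ => u ^ p) volume (b - ub) (b - lb) :=
    intervalIntegral.intervalIntegrable_rpow (Or.inr h0)
  have hii2 : IntervalIntegrable (fun r : ℝ => (b - r) ^ p) volume lb ub := by
    have := (hii.comp_sub_left b).symm
    simpa using this
  have hint : IntegrableOn (fun r : ℝ => (b - r) ^ p) (Set.Ioc lb ub) volume :=
    (intervalIntegrable_iff_integrableOn_Ioc_of_le hlb.le).mp hii2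
  rw [← ofReal_integral_eq_lintegral_ofReal hint]
  · congr 1
    rw [← intervalIntegral.integral_of_le hlb.le]
    have : (∫ r in lb..ub, (b - r) ^ p) = ∫ u in (b - ub)..(b - lb), u ^ p :=
      intervalIntegral.integral_comp_sub_left (fun u : ℝ => u ^ p) b
    rw [this, integral_rpow (Or.inr ⟨hp, h0⟩)]
  · filter_upwards [ae_restrict_mem measurableSet_Ioc] with r hr
    exact Real.rpow_nonneg (by linarith [hr.2]) p

/-- Lemma 6.5 (Lemma `lm2`): for `0 < r₁ < r₂ ≤ r₃` and positive exponents with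
`κ₁ + κ₂ < 1` and `κ₁ + κ₂ + κ₃ > 1`,
`∫₀^{r₁} (r₁ - r)^{-κ₁} (r₂ - r)^{-κ₂} (r₃ - r)^{-κ₃} dr ≤ C (r₃ - r₁)^{1 - κ₁ - κ₂ - κ₃}`
with `C = 1/(1 - κ₁ - κ₂) + 1/(κ₁ + κ₂ + κ₃ - 1)`. -/
theorem stmt_1 (r₁ r₂ r₃ κ₁ κ₂ κ₃ : ℝ) (hr₁ : 0 < r₁) (hr₁₂ : r₁ < r₂) (hr₂₃ : r₂ ≤ r₃)
    (hκ₁ : 0 < κ₁) (hκ₂ : 0 < κ₂) (hκ₃ : 0 < κ₃)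
    (hκ12 : κ₁ + κ₂ < 1) (hκsum : 1 < κ₁ + κ₂ + κ₃) :
    ∫⁻ r in Set.Ioo (0 : ℝ) r₁,
        ENNReal.ofReal ((r₁ - r) ^ (-κ₁) * (r₂ - r) ^ (-κ₂) * (r₃ - r) ^ (-κ₃)) ≤
      ENNReal.ofReal
        ((1 / (1 - κ₁ - κ₂) + 1 / (κ₁ + κ₂ + κ₃ - 1)) *
          (r₃ - r₁) ^ (1 - κ₁ - κ₂ - κ₃)) := by
  set δ : ℝ := r₃ - r₁ with hδdef
  have hδ : 0 < δ := by simp only [hδdef]; linarith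
  set a : ℝ := max 0 (r₁ - δ) with hadef
  have ha0 : 0 ≤ a := le_max_left _ _
  have har : a < r₁ := by
    apply max_lt hr₁; linarith
  have hra : r₁ - a ≤ δ := by
    have := le_max_right 0 (r₁ - δ); linarith
  -- split the domain
  have hsplit : Set.Ioo (0 : ℝ) r₁ = Set.Ioc 0 a ∪ Set.Ioo a r₁ :=
    (Set.Ioc_union_Ioo_eq_Ioo ha0 har).symm
  rw [hsplit, lintegral_union measurableSet_Ioo (by
    rw [Set.disjoint_left]; rintro x ⟨_, hxa⟩ ⟨hax, _⟩; exact absurd hxa (not_le.mpr hax))]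
  -- bound piece 2 (the Ioc piece)
  have piece2 : (∫⁻ r in Set.Ioc (0:ℝ) a,
      ENNReal.ofReal ((r₁ - r) ^ (-κ₁) * (r₂ - r) ^ (-κ₂) * (r₃ - r) ^ (-κ₃))) ≤
      ENNReal.ofReal (1 / (κ₁ + κ₂ + κ₃ - 1) * δ ^ (1 - κ₁ - κ₂ - κ₃)) := by
    rcases le_or_gt a 0 with h | h
    · have : Set.Ioc (0:ℝ) a = ∅ := Set.Ioc_eq_empty (by linarith)
      rw [this]; simp
    · have ha : a = r₁ - δ := by
        rw [hadef, max_eq_right]; rw [hadef] at h; by_contra hc; push_neg at hc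
        rw [max_eq_left (le_of_lt hc)] at h; exact lt_irrefl 0 h
      have hstep : (∫⁻ r in Set.Ioc (0:ℝ) a,
          ENNReal.ofReal ((r₁ - r) ^ (-κ₁) * (r₂ - r) ^ (-κ₂) * (r₃ - r) ^ (-κ₃))) ≤
          ∫⁻ r in Set.Ioc (0:ℝ) a, ENNReal.ofReal ((r₁ - r) ^ (-(κ₁ + κ₂ + κ₃))) := by
        apply setLIntegral_mono' measurableSet_Ioc
        intro r hr
        apply ENNReal.ofReal_le_ofReal
        have h1 : (0:ℝ) < r₁ - r := by linarith [hr.2, har]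
        have h2 : (r₂ - r) ^ (-κ₂) ≤ (r₁ - r) ^ (-κ₂) :=
          Real.rpow_le_rpow_of_nonpos h1 (by linarith) (by linarith)
        have h3 : (r₃ - r) ^ (-κ₃) ≤ (r₁ - r) ^ (-κ₃) :=
          Real.rpow_le_rpow_of_nonpos h1 (by linarith) (by linarith)
        calc (r₁ - r) ^ (-κ₁) * (r₂ - r) ^ (-κ₂) * (r₃ - r) ^ (-κ₃)
            ≤ (r₁ - r) ^ (-κ₁) * (r₁ - r) ^ (-κ₂) * (r₁ - r) ^ (-κ₃) := by
              apply mul_le_mul (mul_le_mul le_rfl h2 (Real.rpow_nonneg (by linarith) _)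
                (Real.rpow_nonneg h1.le _)) h3 (Real.rpow_nonneg (by linarith) _)
              positivity
          _ = (r₁ - r) ^ (-(κ₁ + κ₂ + κ₃)) := by
              rw [← Real.rpow_add h1, ← Real.rpow_add h1]; ring_nf
      refine hstep.trans ?_
      rw [auxB r₁ 0 a (-(κ₁ + κ₂ + κ₃)) h har (by intro hc; rw [neg_eq_iff_eq_neg] at hc; linarith)]
      apply ENNReal.ofReal_le_ofReal
      have hs1 : (0:ℝ) < κ₁ + κ₂ + κ₃ - 1 := by linarith
      have key : ((r₁ - 0) ^ (-(κ₁ + κ₂ + κ₃) + 1) - (r₁ - a) ^ (-(κ₁ + κ₂ + κ₃) + 1)) /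
            (-(κ₁ + κ₂ + κ₃) + 1)
          = ((r₁ - a) ^ (-(κ₁ + κ₂ + κ₃) + 1) - (r₁ - 0) ^ (-(κ₁ + κ₂ + κ₃) + 1)) /
            (κ₁ + κ₂ + κ₃ - 1) := by
        rw [div_eq_div_iff (by linarith) (by linarith)]; ring
      rw [key, ha]
      have : r₁ - (r₁ - δ) = δ := by ring
      rw [this]
      have hre : -(κ₁ + κ₂ + κ₃) + 1 = 1 - κ₁ - κ₂ - κ₃ := by ring
      rw [hre, one_div, inv_mul_eq_div]
      have hnn := Real.rpow_nonneg (by linarith : (0:ℝ) ≤ r₁ - 0) (1 - κ₁ - κ₂ - κ₃)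
      gcongr
      linarith
  -- bound piece 1 (the Ioo piece)
  have piece1 : (∫⁻ r in Set.Ioo a r₁,
      ENNReal.ofReal ((r₁ - r) ^ (-κ₁) * (r₂ - r) ^ (-κ₂) * (r₃ - r) ^ (-κ₃))) ≤
      ENNReal.ofReal (1 / (1 - κ₁ - κ₂) * δ ^ (1 - κ₁ - κ₂ - κ₃)) := by
    have hstep : (∫⁻ r in Set.Ioo a r₁,
        ENNReal.ofReal ((r₁ - r) ^ (-κ₁) * (r₂ - r) ^ (-κ₂) * (r₃ - r) ^ (-κ₃))) ≤
        ∫⁻ r in Set.Ioo a r₁,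
          ENNReal.ofReal (δ ^ (-κ₃)) * ENNReal.ofReal ((r₁ - r) ^ (-(κ₁ + κ₂))) := by
      apply setLIntegral_mono' measurableSet_Ioo
      intro r hr
      rw [← ENNReal.ofReal_mul (Real.rpow_nonneg hδ.le _)]
      apply ENNReal.ofReal_le_ofReal
      have h1 : (0:ℝ) < r₁ - r := by linarith [hr.2]
      have h2 : (r₂ - r) ^ (-κ₂) ≤ (r₁ - r) ^ (-κ₂) :=
        Real.rpow_le_rpow_of_nonpos h1 (by linarith) (by linarith)
      have h3 : (r₃ - r) ^ (-κ₃) ≤ δ ^ (-κ₃) := by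
        apply Real.rpow_le_rpow_of_nonpos hδ ?_ (by linarith)
        have := hr.1; simp only [hδdef]; linarith [hr.1, ha0]
      calc (r₁ - r) ^ (-κ₁) * (r₂ - r) ^ (-κ₂) * (r₃ - r) ^ (-κ₃)
          ≤ (r₁ - r) ^ (-κ₁) * (r₁ - r) ^ (-κ₂) * δ ^ (-κ₃) := by
            apply mul_le_mul (mul_le_mul le_rfl h2 (Real.rpow_nonneg (by linarith) _)
              (Real.rpow_nonneg h1.le _)) h3 (Real.rpow_nonneg (by linarith) _)
            positivity
        _ = δ ^ (-κ₃) * (r₁ - r) ^ (-(κ₁ + κ₂)) := by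
            rw [← Real.rpow_add h1]; ring_nf
    refine hstep.trans ?_
    rw [lintegral_const_mul' _ _ ENNReal.ofReal_ne_top,
      auxA r₁ a (-(κ₁ + κ₂)) har (by linarith)]
    rw [← ENNReal.ofReal_mul (Real.rpow_nonneg hδ.le _)]
    apply ENNReal.ofReal_le_ofReal
    have hq : (0:ℝ) < -(κ₁ + κ₂) + 1 := by linarith
    have hmono : (r₁ - a) ^ (-(κ₁ + κ₂) + 1) ≤ δ ^ (-(κ₁ + κ₂) + 1) :=
      Real.rpow_le_rpow (by linarith) hra hq.le
    calc δ ^ (-κ₃) * ((r₁ - a) ^ (-(κ₁ + κ₂) + 1) / (-(κ₁ + κ₂) + 1))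
        ≤ δ ^ (-κ₃) * (δ ^ (-(κ₁ + κ₂) + 1) / (-(κ₁ + κ₂) + 1)) := by
          apply mul_le_mul_of_nonneg_left (by gcongr)
            (Real.rpow_nonneg hδ.le _)
      _ = 1 / (1 - κ₁ - κ₂) * δ ^ (1 - κ₁ - κ₂ - κ₃) := by
          rw [mul_div_assoc', ← Real.rpow_add hδ]
          have h1 : -κ₃ + (-(κ₁ + κ₂) + 1) = 1 - κ₁ - κ₂ - κ₃ := by ring
          have h2 : -(κ₁ + κ₂) + 1 = 1 - κ₁ - κ₂ := by ring
          rw [h1, h2]; ring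
  calc _ ≤ ENNReal.ofReal (1 / (κ₁ + κ₂ + κ₃ - 1) * δ ^ (1 - κ₁ - κ₂ - κ₃)) +
        ENNReal.ofReal (1 / (1 - κ₁ - κ₂) * δ ^ (1 - κ₁ - κ₂ - κ₃)) :=
      add_le_add piece2 piece1
    _ = ENNReal.ofReal ((1 / (1 - κ₁ - κ₂) + 1 / (κ₁ + κ₂ + κ₃ - 1)) *
        δ ^ (1 - κ₁ - κ₂ - κ₃)) := by
      have h1 : (0:ℝ) < 1 - κ₁ - κ₂ := by linarith
      have h2 : (0:ℝ) < κ₁ + κ₂ + κ₃ - 1 := by linarith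
      rw [← ENNReal.ofReal_add (by positivity) (by positivity)]
      congr 1; ring
end

section
/- Let x ∈ ℝ² and 0 < r < |x|, and let κ > 0. Then the arc-length integral of |y|^{−κ} over the circle {y : |y − x| = r}, i.e. r ∫₀^{2π} |x + r(cos θ, sin θ)|^{−κ} dθ, satisfies: if κ > 1 it is at most C(κ) · min{ (|x| − r)^{1−κ}, r (|x| − r)^{−κ} }, and if 0 < κ < 1 it is at most C(κ) · min{ |x|^{1−κ}, r (|x| − r)^{−κ} }, where C(κ) is a constant depending only on κ. -/
open MeasureTheory Set Metric

set_option maxHeartbeats 1000000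

/-- Lemma 6.3 (Lemma `sphere`): estimate of the arc-length integral of `|y|^{-κ}` over the
circle `{y : |y - x| = r}` in `ℝ²`, for `0 < r < |x|`. The arc-length integral is realized
as `r ∫₀^{2π} |x + r (cos θ, sin θ)|^{-κ} dθ`. -/
theorem stmt_2 (κ : ℝ) (hκ : 0 < κ) :
    ∃ C : ℝ, 0 < C ∧
      ∀ (x : EuclideanSpace ℝ (Fin 2)) (r : ℝ), 0 < r → r < ‖x‖ →
        ((1 < κ →
            r * ∫ θ in (0 : ℝ)..(2 * Real.pi),
                ‖x + r • (WithLp.equiv 2 (Fin 2 → ℝ)).symm ![Real.cos θ, Real.sin θ]‖ ^ (-κ) ≤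
              C * min ((‖x‖ - r) ^ (1 - κ)) (r * (‖x‖ - r) ^ (-κ))) ∧
          (κ < 1 →
            r * ∫ θ in (0 : ℝ)..(2 * Real.pi),
                ‖x + r • (WithLp.equiv 2 (Fin 2 → ℝ)).symm ![Real.cos θ, Real.sin θ]‖ ^ (-κ) ≤
              C * min (‖x‖ ^ (1 - κ)) (r * (‖x‖ - r) ^ (-κ)))) := by
  have hπ : (0:ℝ) < Real.pi := Real.pi_pos
  refine ⟨2 * Real.pi + Real.pi * κ / |κ - 1|
      + 2 * (2 / Real.pi) ^ (-κ) * Real.pi ^ (1 - κ) / |κ - 1|, ?_, ?_⟩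
  · have h1 : (0:ℝ) ≤ Real.pi * κ / |κ - 1| := by positivity
    have h2 : (0:ℝ) ≤ 2 * (2 / Real.pi) ^ (-κ) * Real.pi ^ (1 - κ) / |κ - 1| := by positivity
    linarith
  intro x r hr hrx
  set C := 2 * Real.pi + Real.pi * κ / |κ - 1|
      + 2 * (2 / Real.pi) ^ (-κ) * Real.pi ^ (1 - κ) / |κ - 1| with hCdef
  set M := ‖x‖ with hM
  set d := M - r with hd
  have hM0 : 0 < M := lt_trans hr hrx
  have hd0 : 0 < d := by simp [hd]; linarith
  set E : ℝ → EuclideanSpace ℝ (Fin 2) :=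
    fun θ => (WithLp.equiv 2 (Fin 2 → ℝ)).symm ![Real.cos θ, Real.sin θ] with hE
  set F : ℝ → ℝ := fun θ => ‖x + r • E θ‖ ^ (-κ) with hFdef
  -- basic norm formula
  have hsq : ∀ θ : ℝ, ‖x + r • E θ‖ ^ 2
      = M^2 + r^2 + 2*r*(x 0 * Real.cos θ + x 1 * Real.sin θ) := by
    intro θ
    have h1 : ‖x + r • E θ‖ ^ 2
        = (x 0 + r * Real.cos θ)^2 + (x 1 + r * Real.sin θ)^2 := by
      rw [hE, EuclideanSpace.norm_eq, Real.sq_sqrt (by positivity)]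
      simp [Fin.sum_univ_two, WithLp.equiv_symm_apply, PiLp.toLp_apply, sq_abs]
    have h2 : M^2 = (x 0)^2 + (x 1)^2 := by
      rw [hM, EuclideanSpace.norm_eq, Real.sq_sqrt (by positivity)]
      simp [Fin.sum_univ_two, sq_abs]
    have h3 : Real.cos θ ^2 + Real.sin θ ^2 = 1 := by
      rw [add_comm]; exact Real.sin_sq_add_cos_sq θ
    rw [h1, h2]; nlinarith [h3]
  have hsum2 : M^2 = (x 0)^2 + (x 1)^2 := by
    rw [hM, EuclideanSpace.norm_eq, Real.sq_sqrt (by positivity)]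
    simp [Fin.sum_univ_two, sq_abs]
  -- lower bound d ≤ norm
  have hlow : ∀ θ : ℝ, d ≤ ‖x + r • E θ‖ := by
    intro θ
    have h3 : Real.cos θ ^2 + Real.sin θ ^2 = 1 := by
      rw [add_comm]; exact Real.sin_sq_add_cos_sq θ
    have h1 := hsq θ
    have hu : -M ≤ x 0 * Real.cos θ + x 1 * Real.sin θ := by
      nlinarith [sq_nonneg (x 0 * Real.sin θ - x 1 * Real.cos θ),
        sq_nonneg (x 0 * Real.cos θ + x 1 * Real.sin θ + M), h3, hsum2, hM0]
    have h2 : d^2 ≤ ‖x + r • E θ‖^2 := by nlinarith [hu, hr, h1, hd]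
    calc d = Real.sqrt (d^2) := (Real.sqrt_sq hd0.le).symm
      _ ≤ Real.sqrt (‖x + r • E θ‖^2) := Real.sqrt_le_sqrt h2
      _ = _ := Real.sqrt_sq (norm_nonneg _)
  have hpos : ∀ θ : ℝ, 0 < ‖x + r • E θ‖ := fun θ => lt_of_lt_of_le hd0 (hlow θ)
  -- continuity and periodicity of F
  have hFcont : Continuous F := by
    apply Continuous.rpow_const
    · apply Continuous.norm
      apply continuous_const.add
      refine (?_ : Continuous E).const_smul r
      apply Continuous.comp (PiLp.continuous_toLp 2 (fun _ : Fin 2 => ℝ))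
      apply continuous_pi
      intro i
      fin_cases i <;> simp <;> continuity
    · intro θ; exact Or.inl (ne_of_gt (hpos θ))
  have hFper : Function.Periodic F (2*Real.pi) := by
    intro θ
    simp only [hFdef, hE, Real.cos_add_two_pi, Real.sin_add_two_pi]
  -- trivial pointwise bound
  have hFle : ∀ θ : ℝ, F θ ≤ d ^ (-κ) :=
    fun θ => Real.rpow_le_rpow_of_nonpos hd0 (hlow θ) (by linarith)
  -- trivial integral bound
  have hE1 : (∫ θ in (0:ℝ)..(2*Real.pi), F θ) ≤ 2*Real.pi * d^(-κ) := by
    have := intervalIntegral.integral_mono_on (by positivity : (0:ℝ) ≤ 2*Real.pi)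
      (hFcont.intervalIntegrable _ _) (intervalIntegrable_const (μ := MeasureTheory.volume) (c := d^(-κ)))
      (fun θ _ => hFle θ)
    simpa using this
  -- polar angle
  set ψ := Complex.arg ⟨x 0, x 1⟩ with hψ
  have hzne : ((⟨x 0, x 1⟩ : ℂ)) ≠ 0 := by
    intro hc
    rw [Complex.ext_iff] at hc
    simp only [Complex.zero_re, Complex.zero_im] at hc
    have : M^2 = 0 := by rw [hsum2, hc.1, hc.2]; ring
    nlinarith
  have habs : ‖(⟨x 0, x 1⟩ : ℂ)‖ = M := by
    rw [Complex.norm_def, Complex.normSq_mk]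
    rw [show x 0 * x 0 + x 1 * x 1 = M^2 by nlinarith]
    exact Real.sqrt_sq hM0.le
  have hx0 : x 0 = M * Real.cos ψ := by
    have h1 := Complex.cos_arg hzne
    rw [habs] at h1
    rw [hψ, h1]; field_simp
  have hx1 : x 1 = M * Real.sin ψ := by
    have h1 := Complex.sin_arg (⟨x 0, x 1⟩ : ℂ)
    rw [habs] at h1
    rw [hψ, h1]; field_simp
  set s := ψ + Real.pi with hs
  -- key formula after rotation
  have hkey : ∀ θ : ℝ, ‖x + r • E (θ + s)‖ ^ 2 = d^2 + 4*r*M*(Real.sin (θ/2))^2 := by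
    intro θ
    have hcs : Real.cos ((θ + s) - ψ) = Real.cos (θ+s) * Real.cos ψ + Real.sin (θ+s) * Real.sin ψ :=
      Real.cos_sub _ _
    have harg : (θ + s) - ψ = θ + Real.pi := by rw [hs]; ring
    rw [harg, Real.cos_add_pi] at hcs
    have hsin2 : (Real.sin (θ/2))^2 = 1/2 - Real.cos (2*(θ/2))/2 := Real.sin_sq_eq_half_sub _
    rw [show 2*(θ/2) = θ by ring] at hsin2
    have := hsq (θ + s)
    rw [hx0, hx1] at this
    rw [this, hd]
    nlinarith [hcs, hsin2]
  -- shifted lower bound: c θ ≤ norm for θ ∈ [0, π]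
  set c := 2 * Real.sqrt (r*M) / Real.pi with hc
  have hc0 : 0 < c := by
    have : 0 < Real.sqrt (r*M) := Real.sqrt_pos.2 (by positivity)
    positivity
  have hclow : ∀ θ ∈ Set.Ioc (0:ℝ) Real.pi, c * θ ≤ ‖x + r • E (θ + s)‖ := by
    intro θ hθ
    obtain ⟨hθ0, hθπ⟩ := hθ
    have hjord : θ / Real.pi ≤ Real.sin (θ/2) := by
      have := Real.mul_le_sin (x := θ/2) (by linarith) (by linarith)
      calc θ / Real.pi = 2/Real.pi * (θ/2) := by field_simp
        _ ≤ _ := this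
    have hsq2 : (c*θ)^2 ≤ ‖x + r • E (θ + s)‖^2 := by
      rw [hkey θ]
      have h1 : (θ/Real.pi)^2 ≤ (Real.sin (θ/2))^2 := by
        apply sq_le_sq'
        · have hpos' : (0:ℝ) ≤ θ/Real.pi := by positivity
          linarith
        · exact hjord
      have hcsq : c^2 = 4*r*M/Real.pi^2 := by
        rw [hc, div_pow, mul_pow, Real.sq_sqrt (by positivity : (0:ℝ) ≤ r*M)]
        ring
      have h2 : (c*θ)^2 = 4*r*M*(θ/Real.pi)^2 := by
        rw [mul_pow, hcsq, div_pow]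
        ring
      nlinarith [mul_le_mul_of_nonneg_left h1 (by positivity : (0:ℝ) ≤ 4*r*M)]
    calc c*θ = Real.sqrt ((c*θ)^2) := (Real.sqrt_sq (mul_nonneg hc0.le hθ0.le)).symm
      _ ≤ Real.sqrt (‖x + r • E (θ + s)‖^2) := Real.sqrt_le_sqrt hsq2
      _ = _ := Real.sqrt_sq (norm_nonneg _)
  -- the shifted integrand bound
  have hGle : ∀ θ ∈ Set.Ioc (0:ℝ) Real.pi, F (θ + s) ≤ c^(-κ) * θ^(-κ) := by
    intro θ hθ
    have h1 : F (θ + s) ≤ (c*θ)^(-κ) :=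
      Real.rpow_le_rpow_of_nonpos (mul_pos hc0 hθ.1) (hclow θ hθ) (by linarith)
    rwa [Real.mul_rpow hc0.le (le_of_lt hθ.1)] at h1
  -- reduce to the shifted integral
  have hshift : (∫ θ in (0:ℝ)..(2*Real.pi), F θ) = ∫ θ in (0:ℝ)..(2*Real.pi), F (θ + s) := by
    rw [intervalIntegral.integral_comp_add_right F s]
    have := hFper.intervalIntegral_add_eq s 0
    simpa [add_comm, zero_add] using this.symm
  -- fold to [0, π]
  have hGcont : Continuous (fun θ => F (θ + s)) := hFcont.comp (continuous_id.add continuous_const)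
  have hrefl : ∀ θ : ℝ, F ((2*Real.pi - θ) + s) = F (θ + s) := by
    intro θ
    have hnorm : ‖x + r • E ((2*Real.pi - θ) + s)‖ = ‖x + r • E (θ + s)‖ := by
      have h1 := hkey (2*Real.pi - θ)
      have h2 := hkey θ
      have h3 : Real.sin ((2*Real.pi - θ)/2)^2 = Real.sin (θ/2)^2 := by
        rw [show (2*Real.pi - θ)/2 = Real.pi - θ/2 by ring, Real.sin_pi_sub]
      have h4 : ‖x + r • E ((2*Real.pi - θ) + s)‖^2 = ‖x + r • E (θ + s)‖^2 := by
        rw [h1, h2, h3]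
      calc ‖x + r • E ((2*Real.pi - θ) + s)‖ = Real.sqrt (‖x + r • E ((2*Real.pi - θ) + s)‖^2) :=
            (Real.sqrt_sq (norm_nonneg _)).symm
        _ = Real.sqrt (‖x + r • E (θ + s)‖^2) := by rw [h4]
        _ = _ := Real.sqrt_sq (norm_nonneg _)
    simp only [hFdef]
    rw [hnorm]
  have hfold : (∫ θ in (0:ℝ)..(2*Real.pi), F (θ + s)) = 2 * ∫ θ in (0:ℝ)..Real.pi, F (θ + s) := by
    have hsplit : (∫ θ in (0:ℝ)..(2*Real.pi), F (θ + s))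
        = (∫ θ in (0:ℝ)..Real.pi, F (θ + s)) + ∫ θ in Real.pi..(2*Real.pi), F (θ + s) := by
      rw [intervalIntegral.integral_add_adjacent_intervals (hGcont.intervalIntegrable _ _)
        (hGcont.intervalIntegrable _ _)]
    have h2 : (∫ θ in Real.pi..(2*Real.pi), F (θ + s)) = ∫ θ in (0:ℝ)..Real.pi, F (θ + s) := by
      have := intervalIntegral.integral_comp_sub_left (fun θ => F (θ + s)) (2*Real.pi)
        (a := 0) (b := Real.pi)
      rw [show 2*Real.pi - Real.pi = Real.pi by ring, show 2*Real.pi - 0 = 2*Real.pi by ring] at this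
      rw [← this]
      apply intervalIntegral.integral_congr
      intro θ _
      exact hrefl θ
    rw [hsplit, h2]; ring
  -- nonnegativity of shifted integral over [0,π]
  have hGnn : ∀ θ : ℝ, 0 ≤ F (θ + s) := fun θ => Real.rpow_nonneg (norm_nonneg _) _
  -- Now the two cases
  have hrM : r ≤ Real.sqrt (r*M) := by
    rw [Real.le_sqrt hr.le (by positivity)]
    nlinarith
  have hrc : r / c ≤ Real.pi / 2 := by
    rw [div_le_iff₀ hc0, hc]
    have heq : Real.pi/2 * (2 * Real.sqrt (r*M) / Real.pi) = Real.sqrt (r*M) := by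
      field_simp
    rw [heq]
    exact hrM
  have hC0 : (0:ℝ) < C := by
    rw [hCdef]
    have h1 : (0:ℝ) ≤ Real.pi * κ / |κ - 1| := by positivity
    have h2 : (0:ℝ) ≤ 2 * (2 / Real.pi) ^ (-κ) * Real.pi ^ (1 - κ) / |κ - 1| := by positivity
    linarith
  have htriv : r * (∫ θ in (0:ℝ)..(2*Real.pi), F θ) ≤ 2*Real.pi * (r * d^(-κ)) := by
    calc r * (∫ θ in (0:ℝ)..(2*Real.pi), F θ) ≤ r * (2*Real.pi*d^(-κ)) :=
          mul_le_mul_of_nonneg_left hE1 hr.le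
      _ = 2*Real.pi*(r*d^(-κ)) := by ring
  have hCb : 2*Real.pi ≤ C := by
    rw [hCdef]
    have h1 : (0:ℝ) ≤ Real.pi * κ / |κ - 1| := by positivity
    have h2 : (0:ℝ) ≤ 2 * (2 / Real.pi) ^ (-κ) * Real.pi ^ (1 - κ) / |κ - 1| := by positivity
    linarith
  constructor
  · -- case κ > 1
    intro hκ1
    have hκ1' : (0:ℝ) < κ - 1 := by linarith
    have hda : d^(1-κ) = d * d^(-κ) := by
      rw [show (1:ℝ)-κ = 1 + (-κ) by ring, Real.rpow_add hd0, Real.rpow_one]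
    have hB1 : (∫ θ in (0:ℝ)..Real.pi, F (θ + s)) ≤ (κ/(κ-1)) * (d^(1-κ)/c) := by
      rcases le_or_gt (d/c) Real.pi with hcase | hcase
      · have ht0 : 0 < d/c := div_pos hd0 hc0
        have hadd : (∫ θ in (0:ℝ)..Real.pi, F (θ + s))
            = (∫ θ in (0:ℝ)..(d/c), F (θ + s)) + ∫ θ in (d/c)..Real.pi, F (θ + s) :=
          (intervalIntegral.integral_add_adjacent_intervals (hGcont.intervalIntegrable _ _)
            (hGcont.intervalIntegrable _ _)).symm
        have hA : (∫ θ in (0:ℝ)..(d/c), F (θ + s)) ≤ (d/c) * d^(-κ) := by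
          have := intervalIntegral.integral_mono_on ht0.le (hGcont.intervalIntegrable _ _)
            (intervalIntegrable_const (μ := MeasureTheory.volume) (c := d^(-κ)))
            (fun θ _ => hFle (θ + s))
          simpa using this
        have hInt2 : IntervalIntegrable (fun θ : ℝ => c^(-κ) * θ^(-κ))
            MeasureTheory.volume (d/c) Real.pi :=
          (intervalIntegral.intervalIntegrable_rpow (Or.inr (notMem_uIcc_of_lt ht0 hπ))).const_mul _
        have hB : (∫ θ in (d/c)..Real.pi, F (θ + s)) ≤ ∫ θ in (d/c)..Real.pi, c^(-κ) * θ^(-κ) := by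
          apply intervalIntegral.integral_mono_on hcase (hGcont.intervalIntegrable _ _) hInt2
          intro θ hθ
          exact hGle θ ⟨lt_of_lt_of_le ht0 hθ.1, hθ.2⟩
        have hBval : (∫ θ in (d/c)..Real.pi, c^(-κ) * θ^(-κ))
            = c^(-κ) * ((Real.pi^(-κ+1) - (d/c)^(-κ+1))/(-κ+1)) := by
          rw [intervalIntegral.integral_const_mul,
            integral_rpow (Or.inr ⟨by intro hcon; linarith [neg_eq_iff_eq_neg.mp hcon],
              notMem_uIcc_of_lt ht0 hπ⟩)]
        have hπp : (0:ℝ) ≤ Real.pi^(-κ+1) := Real.rpow_nonneg hπ.le _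
        have hkeyval : c^(-κ) * (d/c)^(-κ+1) = d^(1-κ)/c := by
          rw [show (-κ+1 : ℝ) = 1-κ by ring, Real.div_rpow hd0.le hc0.le]
          have h1 : c^(-κ) * (d^(1-κ)/c^(1-κ)) = d^(1-κ) * (c^(-κ)/c^(1-κ)) := by ring
          have h2 : c^(-κ)/c^(1-κ) = c^(-(1:ℝ)) := by
            rw [← Real.rpow_sub hc0]; congr 1; ring
          rw [h1, h2, Real.rpow_neg_one, div_eq_mul_inv]
        have hfin : c^(-κ) * ((Real.pi^(-κ+1) - (d/c)^(-κ+1))/(-κ+1)) ≤ (d^(1-κ)/c) / (κ-1) := by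
          have h1 : (Real.pi^(-κ+1) - (d/c)^(-κ+1))/(-κ+1)
              = ((d/c)^(-κ+1) - Real.pi^(-κ+1))/(κ-1) := by
            rw [show (-κ+1:ℝ) = -(κ-1) by ring, div_neg]
            ring
          rw [h1]
          have h2 : c^(-κ) * (((d/c)^(-κ+1) - Real.pi^(-κ+1))/(κ-1))
              ≤ c^(-κ) * ((d/c)^(-κ+1)/(κ-1)) := by
            have hc' : (0:ℝ) ≤ c^(-κ) := Real.rpow_nonneg hc0.le _
            have hsub : (d/c)^(-κ+1) - Real.pi^(-κ+1) ≤ (d/c)^(-κ+1) := by linarith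
            have hdiv : ((d/c)^(-κ+1) - Real.pi^(-κ+1))/(κ-1) ≤ (d/c)^(-κ+1)/(κ-1) := by
              rw [div_eq_mul_inv, div_eq_mul_inv]
              exact mul_le_mul_of_nonneg_right hsub (inv_nonneg.mpr hκ1'.le)
            exact mul_le_mul_of_nonneg_left hdiv hc'
          have h3 : c^(-κ) * ((d/c)^(-κ+1)/(κ-1)) = (d^(1-κ)/c)/(κ-1) := by
            rw [← mul_div_assoc, hkeyval]
          linarith
        have hBle : (∫ θ in (d/c)..Real.pi, F (θ + s)) ≤ (d^(1-κ)/c)/(κ-1) := by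
          rw [hBval] at hB
          exact hB.trans hfin
        have hAle : (∫ θ in (0:ℝ)..(d/c), F (θ + s)) ≤ d^(1-κ)/c := by
          have h3' : (d/c)*d^(-κ) = d^(1-κ)/c := by rw [hda]; ring
          linarith
        have heq : (d^(1-κ)/c) + (d^(1-κ)/c)/(κ-1) = κ/(κ-1)*(d^(1-κ)/c) := by
          field_simp
          ring
        rw [hadd]
        linarith
      · have h1 : (∫ θ in (0:ℝ)..Real.pi, F (θ+s)) ≤ Real.pi * d^(-κ) := by
          have := intervalIntegral.integral_mono_on hπ.le (hGcont.intervalIntegrable _ _)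
            (intervalIntegrable_const (μ := MeasureTheory.volume) (c := d^(-κ)))
            (fun θ _ => hFle (θ + s))
          simpa using this
        have h2 : Real.pi * d^(-κ) ≤ (d/c)*d^(-κ) :=
          mul_le_mul_of_nonneg_right hcase.le (Real.rpow_nonneg hd0.le _)
        have h3 : (d/c)*d^(-κ) = d^(1-κ)/c := by rw [hda]; ring
        have h4 : d^(1-κ)/c ≤ (κ/(κ-1))*(d^(1-κ)/c) := by
          apply le_mul_of_one_le_left
          · apply div_nonneg (Real.rpow_nonneg hd0.le _) hc0.le
          · rw [le_div_iff₀ hκ1']; linarith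
        linarith
    have hImain : r * (∫ θ in (0:ℝ)..(2*Real.pi), F θ) ≤ Real.pi * κ/(κ-1) * d^(1-κ) := by
      rw [hshift, hfold]
      have hGint0 : (0:ℝ) ≤ κ/(κ-1) * (d^(1-κ)/c) := by
        apply mul_nonneg (by positivity)
        exact div_nonneg (Real.rpow_nonneg hd0.le _) hc0.le
      calc r * (2 * ∫ θ in (0:ℝ)..Real.pi, F (θ + s))
          ≤ r * (2 * ((κ/(κ-1)) * (d^(1-κ)/c))) := by
            apply mul_le_mul_of_nonneg_left _ hr.le
            apply mul_le_mul_of_nonneg_left hB1 (by norm_num)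
        _ = (2*(r/c)) * ((κ/(κ-1)) * d^(1-κ)) := by ring
        _ ≤ Real.pi * ((κ/(κ-1)) * d^(1-κ)) := by
            apply mul_le_mul_of_nonneg_right _
              (mul_nonneg (by positivity) (Real.rpow_nonneg hd0.le _))
            linarith
        _ = Real.pi * κ/(κ-1) * d^(1-κ) := by ring
    have hCa : Real.pi * κ/(κ-1) ≤ C := by
      rw [hCdef, abs_of_pos hκ1']
      have h2 : (0:ℝ) ≤ 2*(2/Real.pi)^(-κ)*Real.pi^(1-κ)/(κ-1) :=
        div_nonneg (by positivity) hκ1'.le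
      linarith
    calc r * (∫ θ in (0:ℝ)..(2*Real.pi), F θ)
        ≤ min (C * (d^(1-κ))) (C * (r*d^(-κ))) :=
          le_min (hImain.trans (mul_le_mul_of_nonneg_right hCa (Real.rpow_nonneg hd0.le _)))
            (htriv.trans (mul_le_mul_of_nonneg_right hCb
              (mul_nonneg hr.le (Real.rpow_nonneg hd0.le _))))
      _ = C * min (d^(1-κ)) (r*d^(-κ)) := (mul_min_of_nonneg _ _ hC0.le).symm
  · -- case κ < 1
    intro hκ1
    have hκ1' : (0:ℝ) < 1 - κ := by linarith
    have habs1 : |κ-1| = 1-κ := by rw [abs_of_neg (by linarith : κ-1 < 0)]; ring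
    have hInt2 : IntervalIntegrable (fun θ : ℝ => c^(-κ)*θ^(-κ)) MeasureTheory.volume 0 Real.pi :=
      (intervalIntegral.intervalIntegrable_rpow' (by linarith)).const_mul _
    have hae : (fun θ => F (θ+s)) ≤ᵐ[MeasureTheory.volume.restrict (Set.Icc (0:ℝ) Real.pi)]
        fun θ => c^(-κ)*θ^(-κ) := by
      have h0 : ∀ᵐ θ ∂(MeasureTheory.volume.restrict (Set.Icc (0:ℝ) Real.pi)), θ ≠ 0 := by
        refine ae_restrict_of_ae ?_
        have h1 : {a : ℝ | ¬ a ≠ 0} = {0} := by ext a; simp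
        rw [ae_iff, h1]
        exact Real.volume_singleton
      have hmem := ae_restrict_mem (μ := MeasureTheory.volume) (measurableSet_Icc : MeasurableSet (Set.Icc (0:ℝ) Real.pi))
      filter_upwards [h0, hmem] with θ hne hmem'
      exact hGle θ ⟨lt_of_le_of_ne hmem'.1 (Ne.symm hne), hmem'.2⟩
    have hB2 : (∫ θ in (0:ℝ)..Real.pi, F (θ + s)) ≤ c^(-κ) * (Real.pi^(-κ+1)/(-κ+1)) := by
      have hmono := intervalIntegral.integral_mono_ae_restrict hπ.le
        (hGcont.intervalIntegrable _ _) hInt2 hae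
      have hval : (∫ θ in (0:ℝ)..Real.pi, c^(-κ)*θ^(-κ))
          = c^(-κ)*(Real.pi^(-κ+1)/(-κ+1)) := by
        rw [intervalIntegral.integral_const_mul, integral_rpow (Or.inl (by linarith))]
        rw [Real.zero_rpow (by intro hcon; linarith [neg_eq_iff_eq_neg.mp (by linarith [hcon] : -κ = -1)] : (-κ+1:ℝ) ≠ 0)]
        ring
      rw [hval] at hmono
      exact hmono
    have hrc2 : r * c^(-κ) ≤ (2/Real.pi)^(-κ) * M^(1-κ) := by
      have hsqrtmul : Real.sqrt (r*M) = Real.sqrt r * Real.sqrt M := Real.sqrt_mul hr.le M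
      have hcform : c = (2/Real.pi) * Real.sqrt r * Real.sqrt M := by rw [hc, hsqrtmul]; ring
      have hcrpow : c^(-κ) = (2/Real.pi)^(-κ) * (Real.sqrt r)^(-κ) * (Real.sqrt M)^(-κ) := by
        rw [hcform, Real.mul_rpow (mul_nonneg (by positivity) (Real.sqrt_nonneg r))
          (Real.sqrt_nonneg M), Real.mul_rpow (by positivity) (Real.sqrt_nonneg r)]
      have hsr : (Real.sqrt r)^(-κ) = r^(-(κ/2)) := by
        rw [Real.sqrt_eq_rpow, ← Real.rpow_mul hr.le, show (1/2)*(-κ) = -(κ/2) by ring]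
      have hsM : (Real.sqrt M)^(-κ) = M^(-(κ/2)) := by
        rw [Real.sqrt_eq_rpow, ← Real.rpow_mul hM0.le, show (1/2)*(-κ) = -(κ/2) by ring]
      have hrr : r^((1:ℝ)-κ/2) = r * r^(-(κ/2)) := by
        rw [show ((1:ℝ)-κ/2) = 1 + (-(κ/2)) by ring, Real.rpow_add hr, Real.rpow_one]
      have hMM : M^((1:ℝ)-κ/2) * M^(-(κ/2)) = M^(1-κ) := by
        rw [← Real.rpow_add hM0]; congr 1; ring
      calc r * c^(-κ) = (2/Real.pi)^(-κ) * (r * r^(-(κ/2))) * M^(-(κ/2)) := by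
            rw [hcrpow, hsr, hsM]; ring
        _ = (2/Real.pi)^(-κ) * r^((1:ℝ)-κ/2) * M^(-(κ/2)) := by rw [hrr]
        _ ≤ (2/Real.pi)^(-κ) * M^((1:ℝ)-κ/2) * M^(-(κ/2)) := by
            apply mul_le_mul_of_nonneg_right _ (Real.rpow_nonneg hM0.le _)
            exact mul_le_mul_of_nonneg_left
              (Real.rpow_le_rpow hr.le hrx.le (by linarith)) (Real.rpow_nonneg (by positivity) _)
        _ = (2/Real.pi)^(-κ) * M^(1-κ) := by rw [mul_assoc, hMM]
    have hImain : r * (∫ θ in (0:ℝ)..(2*Real.pi), F θ)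
        ≤ (2*(2/Real.pi)^(-κ)*Real.pi^(1-κ)/(1-κ)) * M^(1-κ) := by
      rw [hshift, hfold]
      have h0 : (0:ℝ) ≤ Real.pi^(-κ+1)/(-κ+1) :=
        div_nonneg (Real.rpow_nonneg hπ.le _) (by linarith)
      calc r * (2 * ∫ θ in (0:ℝ)..Real.pi, F (θ + s))
          ≤ r * (2*(c^(-κ) * (Real.pi^(-κ+1)/(-κ+1)))) := by
            apply mul_le_mul_of_nonneg_left _ hr.le
            apply mul_le_mul_of_nonneg_left hB2 (by norm_num)
        _ = (2*(Real.pi^(-κ+1)/(-κ+1))) * (r * c^(-κ)) := by ring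
        _ ≤ (2*(Real.pi^(-κ+1)/(-κ+1))) * ((2/Real.pi)^(-κ) * M^(1-κ)) := by
            apply mul_le_mul_of_nonneg_left hrc2
            linarith
        _ = (2*(2/Real.pi)^(-κ)*Real.pi^(1-κ)/(1-κ)) * M^(1-κ) := by
            rw [show (-κ+1:ℝ) = 1-κ by ring]
            ring
    have hCc : 2*(2/Real.pi)^(-κ)*Real.pi^(1-κ)/(1-κ) ≤ C := by
      rw [hCdef, habs1]
      have h1 : (0:ℝ) ≤ Real.pi * κ / (1-κ) := by positivity
      linarith
    calc r * (∫ θ in (0:ℝ)..(2*Real.pi), F θ)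
        ≤ min (C * (M^(1-κ))) (C * (r*d^(-κ))) :=
          le_min (hImain.trans (mul_le_mul_of_nonneg_right hCc (Real.rpow_nonneg hM0.le _)))
            (htriv.trans (mul_le_mul_of_nonneg_right hCb
              (mul_nonneg hr.le (Real.rpow_nonneg hd0.le _))))
      _ = C * min (M^(1-κ)) (r*d^(-κ)) := (mul_min_of_nonneg _ _ hC0.le).symm
end

section
/- Let R, A > 0 and 0 < α < 1/2. Let u₀ : ℝ² → ℝ be measurable with |u₀(y)| ≤ A |y|^{−1/2−α} for all |y| > R. Then there is a constant C = C(α), depending only on α, such that for every t > 0 and every x ∈ ℝ² with |x| > R + t, (1/(2π t)) ∫_{B(x,t)} |u₀(y)| / √(t² − |y−x|²) dy ≤ C · A · |x|^{−1/2} (|x| − t)^{−α}. -/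
open MeasureTheory Set Metric
open scoped ENNReal

namespace Stmt7Aux

lemma rpow_neg_half_eq (x : ℝ) (hx : 0 ≤ x) : x ^ (-(1/2) : ℝ) = 1 / Real.sqrt x := by
  rw [Real.rpow_neg hx, Real.sqrt_eq_rpow, one_div]
  norm_num

lemma L0 {b : ℝ} (hb : 0 < b) :
    ∫⁻ u in Ioo (0:ℝ) b, ENNReal.ofReal (1 / Real.sqrt u) = ENNReal.ofReal (2 * Real.sqrt b) := by
  have h1 : ∫⁻ u in Ioo (0:ℝ) b, ENNReal.ofReal (1 / Real.sqrt u)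
      = ∫⁻ u in Ioo (0:ℝ) b, ENNReal.ofReal (u ^ (-(1/2) : ℝ)) := by
    refine setLIntegral_congr_fun measurableSet_Ioo (fun u hu => ?_)
    rw [rpow_neg_half_eq u hu.1.le]
  have hint : IntegrableOn (fun u : ℝ => u ^ (-(1/2) : ℝ)) (Ioo 0 b) := by
    have h := (intervalIntegral.intervalIntegrable_rpow' (r := -(1/2)) (a := 0) (b := b) (by norm_num)).1
    exact h.mono_set Ioo_subset_Ioc_self
  have hpos : 0 ≤ᵐ[volume.restrict (Ioo (0:ℝ) b)] fun u : ℝ => u ^ (-(1/2) : ℝ) :=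
    ae_restrict_of_forall_mem measurableSet_Ioo fun u hu => Real.rpow_nonneg hu.1.le _
  rw [h1, ← ofReal_integral_eq_lintegral_ofReal hint hpos]
  congr 1
  rw [← integral_Ioc_eq_integral_Ioo, ← intervalIntegral.integral_of_le hb.le,
    integral_rpow (Or.inl (by norm_num))]
  rw [Real.sqrt_eq_rpow]
  norm_num
  ring


lemma L1 {t : ℝ} (ht : 0 < t) :
    ∫⁻ v in Ioo (-t) t, ENNReal.ofReal (|v| ^ (-(1/2) : ℝ)) ≤ ENNReal.ofReal (4 * Real.sqrt t) := by
  have hIoo : ∫⁻ v in Ioo (0:ℝ) t, ENNReal.ofReal (|v| ^ (-(1/2) : ℝ))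
      = ENNReal.ofReal (2 * Real.sqrt t) := by
    rw [← L0 ht]
    refine setLIntegral_congr_fun measurableSet_Ioo (fun v hv => ?_)
    rw [abs_of_pos hv.1, rpow_neg_half_eq v hv.1.le]
  have hsplit : Ioo (-t) t = Ioo (-t) 0 ∪ Ico 0 t := (Ioo_union_Ico_eq_Ioo (by linarith) ht.le).symm
  rw [hsplit, lintegral_union measurableSet_Ico (by apply Set.disjoint_left.2; rintro v ⟨_, h0⟩ ⟨h1, _⟩; linarith)]
  have h2 : ∫⁻ v in Ico (0:ℝ) t, ENNReal.ofReal (|v| ^ (-(1/2) : ℝ))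
      = ENNReal.ofReal (2 * Real.sqrt t) :=
    ((setLIntegral_congr (Ioo_ae_eq_Ico (a := (0:ℝ)) (b := t))).symm).trans hIoo
  have h3 : ∫⁻ v in Ioo (-t) 0, ENNReal.ofReal (|v| ^ (-(1/2) : ℝ))
      = ENNReal.ofReal (2 * Real.sqrt t) := by
    have hpre : (fun v : ℝ => -v) ⁻¹' (Ioo (-t) 0) = Ioo 0 t := by
      ext v; simp only [mem_preimage, mem_Ioo]
      constructor <;> intro h <;> constructor <;> linarith [h.1, h.2]
    have := (Measure.measurePreserving_neg (volume : Measure ℝ)).setLIntegral_comp_preimage_emb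
      (Homeomorph.neg ℝ).measurableEmbedding
      (fun v => ENNReal.ofReal (|v| ^ (-(1/2) : ℝ))) (Ioo (-t) 0)
    rw [hpre] at this
    rw [← this, ← hIoo]
    refine setLIntegral_congr_fun measurableSet_Ioo (fun v hv => ?_)
    rw [abs_neg]
  rw [h2, h3, ← ENNReal.ofReal_add (by positivity) (by positivity)]
  exact ENNReal.ofReal_le_ofReal (by ring_nf; linarith)


lemma L2 {a : ℝ} (ha : 0 < a) :
    ∫⁻ u in Ioo (-a) a, ENNReal.ofReal (1 / Real.sqrt (a ^ 2 - u ^ 2)) ≤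
      ENNReal.ofReal (4 * Real.sqrt 2) := by
  have hsa : (0:ℝ) < Real.sqrt a := Real.sqrt_pos.2 ha
  have ptwise : ∀ u ∈ Ioo (-a) a, 1 / Real.sqrt (a ^ 2 - u ^ 2) ≤
      (1 / Real.sqrt a) * (1 / Real.sqrt (a - u)) + (1 / Real.sqrt a) * (1 / Real.sqrt (a + u)) := by
    intro u hu
    obtain ⟨h1, h2⟩ := hu
    have hau : 0 < a - u := by linarith
    have hau' : 0 < a + u := by linarith
    rcases le_or_gt 0 u with h0 | h0
    · have key : a * (a - u) ≤ a ^ 2 - u ^ 2 := by nlinarith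
      have hs : Real.sqrt (a * (a - u)) = Real.sqrt a * Real.sqrt (a - u) := Real.sqrt_mul ha.le _
      have hpos : 0 < Real.sqrt a * Real.sqrt (a - u) := by positivity
      have hle : 1 / Real.sqrt (a ^ 2 - u ^ 2) ≤ 1 / (Real.sqrt a * Real.sqrt (a - u)) := by
        apply one_div_le_one_div_of_le hpos
        rw [← hs]; exact Real.sqrt_le_sqrt key
      have hnn : 0 ≤ (1 / Real.sqrt a) * (1 / Real.sqrt (a + u)) := by positivity
      calc 1 / Real.sqrt (a ^ 2 - u ^ 2) ≤ 1 / (Real.sqrt a * Real.sqrt (a - u)) := hle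
        _ = (1 / Real.sqrt a) * (1 / Real.sqrt (a - u)) := by rw [one_div_mul_one_div]
        _ ≤ _ := by linarith
    · have key : a * (a + u) ≤ a ^ 2 - u ^ 2 := by nlinarith
      have hs : Real.sqrt (a * (a + u)) = Real.sqrt a * Real.sqrt (a + u) := Real.sqrt_mul ha.le _
      have hpos : 0 < Real.sqrt a * Real.sqrt (a + u) := by positivity
      have hle : 1 / Real.sqrt (a ^ 2 - u ^ 2) ≤ 1 / (Real.sqrt a * Real.sqrt (a + u)) := by
        apply one_div_le_one_div_of_le hpos
        rw [← hs]; exact Real.sqrt_le_sqrt key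
      have hnn : 0 ≤ (1 / Real.sqrt a) * (1 / Real.sqrt (a - u)) := by positivity
      calc 1 / Real.sqrt (a ^ 2 - u ^ 2) ≤ 1 / (Real.sqrt a * Real.sqrt (a + u)) := hle
        _ = (1 / Real.sqrt a) * (1 / Real.sqrt (a + u)) := by rw [one_div_mul_one_div]
        _ ≤ _ := by linarith
  have msqrt : Measurable Real.sqrt := Real.continuous_sqrt.measurable
  have m1 : Measurable fun u : ℝ => ENNReal.ofReal ((1 / Real.sqrt a) * (1 / Real.sqrt (a - u))) :=
    (measurable_const.mul (measurable_const.div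
      (msqrt.comp (measurable_const.sub measurable_id)))).ennreal_ofReal
  have step : ∫⁻ u in Ioo (-a) a, ENNReal.ofReal (1 / Real.sqrt (a ^ 2 - u ^ 2)) ≤
      ∫⁻ u in Ioo (-a) a, (ENNReal.ofReal ((1 / Real.sqrt a) * (1 / Real.sqrt (a - u))) +
        ENNReal.ofReal ((1 / Real.sqrt a) * (1 / Real.sqrt (a + u)))) := by
    refine lintegral_mono_ae (ae_restrict_of_forall_mem measurableSet_Ioo fun u hu => ?_)
    rw [← ENNReal.ofReal_add (by positivity) (by positivity)]
    exact ENNReal.ofReal_le_ofReal (ptwise u hu)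
  refine le_trans step ?_
  rw [lintegral_add_left m1]
  have hT2 : ∫⁻ u in Ioo (-a) a, ENNReal.ofReal ((1 / Real.sqrt a) * (1 / Real.sqrt (a + u)))
      = ENNReal.ofReal (1 / Real.sqrt a) * ENNReal.ofReal (2 * Real.sqrt (2 * a)) := by
    have heq : ∀ u : ℝ, ENNReal.ofReal ((1 / Real.sqrt a) * (1 / Real.sqrt (a + u)))
        = ENNReal.ofReal (1 / Real.sqrt a) * ENNReal.ofReal (1 / Real.sqrt (a + u)) := fun u =>
      ENNReal.ofReal_mul (by positivity)
    simp_rw [heq]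
    rw [lintegral_const_mul' _ _ ENNReal.ofReal_ne_top]
    congr 1
    have hpre : (fun u : ℝ => a + u) ⁻¹' (Ioo 0 (2 * a)) = Ioo (-a) a := by
      ext u; simp only [mem_preimage, mem_Ioo]
      constructor <;> intro h <;> constructor <;> linarith [h.1, h.2]
    have := (measurePreserving_add_left (volume : Measure ℝ) a).setLIntegral_comp_preimage_emb
      (Homeomorph.addLeft a).measurableEmbedding
      (fun v => ENNReal.ofReal (1 / Real.sqrt v)) (Ioo 0 (2 * a))
    rw [hpre] at this
    rw [this, L0 (by linarith)]
  have hT1 : ∫⁻ u in Ioo (-a) a, ENNReal.ofReal ((1 / Real.sqrt a) * (1 / Real.sqrt (a - u)))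
      = ∫⁻ u in Ioo (-a) a, ENNReal.ofReal ((1 / Real.sqrt a) * (1 / Real.sqrt (a + u))) := by
    have hpre : (fun v : ℝ => -v) ⁻¹' (Ioo (-a) a) = Ioo (-a) a := by
      ext v; simp only [mem_preimage, mem_Ioo]
      constructor <;> intro h <;> constructor <;> linarith [h.1, h.2]
    have := (Measure.measurePreserving_neg (volume : Measure ℝ)).setLIntegral_comp_preimage_emb
      (Homeomorph.neg ℝ).measurableEmbedding
      (fun u => ENNReal.ofReal ((1 / Real.sqrt a) * (1 / Real.sqrt (a + u)))) (Ioo (-a) a)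
    rw [hpre] at this
    rw [← this]
    refine setLIntegral_congr_fun measurableSet_Ioo (fun u _ => ?_)
    rw [show a + -u = a - u by ring]
  rw [hT1, hT2, ← two_mul, ← mul_assoc]
  rw [show (2:ℝ≥0∞) = ENNReal.ofReal 2 by norm_num, ← ENNReal.ofReal_mul (by norm_num),
    ← ENNReal.ofReal_mul (by positivity)]
  apply ENNReal.ofReal_le_ofReal
  have h2a : Real.sqrt (2 * a) = Real.sqrt 2 * Real.sqrt a := Real.sqrt_mul (by norm_num) a
  rw [h2a]
  rw [show 2 * (1 / Real.sqrt a) * (2 * (Real.sqrt 2 * Real.sqrt a))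
      = 4 * Real.sqrt 2 * (Real.sqrt a / Real.sqrt a) by ring]
  rw [div_self hsa.ne', mul_one]


lemma L3 {t : ℝ} (ht : 0 < t) (g : ℝ → ℝ) (hg : Measurable g) (hg0 : ∀ v, 0 ≤ g v) :
    ∫⁻ p : ℝ × ℝ in {p : ℝ × ℝ | p.1 ^ 2 + p.2 ^ 2 < t ^ 2},
        ENNReal.ofReal (g p.2 / Real.sqrt (t ^ 2 - p.1 ^ 2 - p.2 ^ 2)) ≤
      ENNReal.ofReal (4 * Real.sqrt 2) * ∫⁻ v in Ioo (-t) t, ENNReal.ofReal (g v) := by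
  set S : Set (ℝ × ℝ) := {p : ℝ × ℝ | p.1 ^ 2 + p.2 ^ 2 < t ^ 2} with hSdef
  have hS : MeasurableSet S := by
    apply measurableSet_lt
    · fun_prop
    · fun_prop
  set F : ℝ × ℝ → ℝ≥0∞ := fun p => ENNReal.ofReal (g p.2 / Real.sqrt (t ^ 2 - p.1 ^ 2 - p.2 ^ 2))
    with hFdef
  have msqrt : Measurable Real.sqrt := Real.continuous_sqrt.measurable
  have hF : Measurable F := by
    apply Measurable.ennreal_ofReal
    apply Measurable.div
    · exact hg.comp measurable_snd
    · apply msqrt.comp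
      fun_prop
  have hind : ∫⁻ p in S, F p = ∫⁻ p : ℝ × ℝ, S.indicator F p := (lintegral_indicator hS F).symm
  rw [hind, Measure.volume_eq_prod, lintegral_prod_symm _ (hF.indicator hS).aemeasurable]
  have inner_bound : ∀ v : ℝ, ∫⁻ u : ℝ, S.indicator F (u, v) ≤
      (Ioo (-t) t).indicator (fun v => ENNReal.ofReal (4 * Real.sqrt 2) * ENNReal.ofReal (g v)) v := by
    intro v
    have hrw : (fun u : ℝ => S.indicator F (u, v)) =
        fun u : ℝ => ({u : ℝ | u ^ 2 < t ^ 2 - v ^ 2}.indicator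
          (fun u => ENNReal.ofReal (g v / Real.sqrt ((t ^ 2 - v ^ 2) - u ^ 2))) u) := by
      funext u
      by_cases h : u ^ 2 < t ^ 2 - v ^ 2
      · have h1 : (u, v) ∈ S := by simp only [hSdef, mem_setOf_eq]; linarith
        have h2 : u ∈ {u : ℝ | u ^ 2 < t ^ 2 - v ^ 2} := h
        rw [indicator_of_mem h1, indicator_of_mem h2]
        simp only [hFdef]
        congr 2
        ring
      · have h1 : (u, v) ∉ S := by simp only [hSdef, mem_setOf_eq]; intro hc; exact h (by linarith)
        have h2 : u ∉ {u : ℝ | u ^ 2 < t ^ 2 - v ^ 2} := h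
        rw [indicator_of_notMem h1, indicator_of_notMem h2]
    rw [hrw]
    have hmeas : MeasurableSet {u : ℝ | u ^ 2 < t ^ 2 - v ^ 2} := by
      apply measurableSet_lt <;> fun_prop
    rw [lintegral_indicator hmeas]
    by_cases hv : v ∈ Ioo (-t) t
    · have hvt : v ^ 2 < t ^ 2 := by
        obtain ⟨h1, h2⟩ := hv
        nlinarith
      set a := Real.sqrt (t ^ 2 - v ^ 2) with hadef
      have ha : 0 < a := Real.sqrt_pos.2 (by linarith)
      have ha2 : a ^ 2 = t ^ 2 - v ^ 2 := Real.sq_sqrt (by linarith)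
      have hset : {u : ℝ | u ^ 2 < t ^ 2 - v ^ 2} = Ioo (-a) a := by
        ext u
        simp only [mem_setOf_eq, mem_Ioo, ← ha2]
        constructor
        · intro h; constructor <;> nlinarith
        · intro ⟨h1, h2⟩; nlinarith
      rw [hset, indicator_of_mem hv]
      calc ∫⁻ u in Ioo (-a) a, ENNReal.ofReal (g v / Real.sqrt (t ^ 2 - v ^ 2 - u ^ 2))
          = ∫⁻ u in Ioo (-a) a, ENNReal.ofReal (g v) * ENNReal.ofReal (1 / Real.sqrt (a ^ 2 - u ^ 2)) := by
            refine setLIntegral_congr_fun measurableSet_Ioo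
              (fun u hu => ?_)
            rw [← ENNReal.ofReal_mul (hg0 v), ← ha2]
            congr 1
            rw [mul_one_div]
        _ = ENNReal.ofReal (g v) * ∫⁻ u in Ioo (-a) a, ENNReal.ofReal (1 / Real.sqrt (a ^ 2 - u ^ 2)) :=
            lintegral_const_mul' _ _ ENNReal.ofReal_ne_top
        _ ≤ ENNReal.ofReal (g v) * ENNReal.ofReal (4 * Real.sqrt 2) :=
            mul_le_mul_right (L2 ha) _
        _ = ENNReal.ofReal (4 * Real.sqrt 2) * ENNReal.ofReal (g v) := mul_comm _ _
    · have hempty : {u : ℝ | u ^ 2 < t ^ 2 - v ^ 2} = (∅ : Set ℝ) := by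
        ext u
        simp only [mem_setOf_eq, mem_empty_iff_false, iff_false, not_lt]
        simp only [mem_Ioo, not_and_or, not_lt] at hv
        rcases hv with h | h <;> nlinarith [sq_nonneg u]
      rw [hempty]
      simp
  calc ∫⁻ v : ℝ, ∫⁻ u : ℝ, S.indicator F (u, v)
      ≤ ∫⁻ v : ℝ, (Ioo (-t) t).indicator
          (fun v => ENNReal.ofReal (4 * Real.sqrt 2) * ENNReal.ofReal (g v)) v :=
        lintegral_mono inner_bound
    _ = ∫⁻ v in Ioo (-t) t, ENNReal.ofReal (4 * Real.sqrt 2) * ENNReal.ofReal (g v) :=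
        lintegral_indicator measurableSet_Ioo _
    _ = ENNReal.ofReal (4 * Real.sqrt 2) * ∫⁻ v in Ioo (-t) t, ENNReal.ofReal (g v) :=
        lintegral_const_mul' _ _ ENNReal.ofReal_ne_top


lemma L4 {x : EuclideanSpace ℝ (Fin 2)} (hx : 0 < ‖x‖) {t : ℝ} (ht : 0 < t)
    (F : EuclideanSpace ℝ (Fin 2) → ℝ≥0∞) :
    ∃ Φ : ℝ × ℝ → EuclideanSpace ℝ (Fin 2),
      (∀ p : ℝ × ℝ, ‖Φ p - x‖ ^ 2 = p.1 ^ 2 + p.2 ^ 2) ∧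
      (∀ p : ℝ × ℝ, ‖Φ p‖ = Real.sqrt ((‖x‖ + p.1) ^ 2 + p.2 ^ 2)) ∧
      ∫⁻ y in ball x t, F y =
        ∫⁻ p in {p : ℝ × ℝ | p.1 ^ 2 + p.2 ^ 2 < t ^ 2}, F (Φ p) := by
  set e := Complex.orthonormalBasisOneI.repr.symm with hedef
  -- e : EuclideanSpace ℝ (Fin 2) ≃ₗᵢ[ℝ] ℂ
  set xc : ℂ := e x with hxcdef
  have hxc : ‖xc‖ = ‖x‖ := by
    exact e.norm_map x
  set c : ℂ := xc / (‖x‖ : ℂ) with hcdef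
  have hcabs : ‖c‖ = 1 := by
    rw [hcdef, norm_div, hxc, Complex.norm_real, Real.norm_eq_abs, abs_of_pos hx, div_self hx.ne']
  have hcmem : c ∈ Submonoid.unitSphere ℂ := by
    simp only [Submonoid.unitSphere, Submonoid.mem_mk, Subsemigroup.mem_mk]
    exact mem_sphere_zero_iff_norm.2 hcabs
  set a : Circle := ⟨c, hcmem⟩ with hadef
  set z : ℝ × ℝ → ℂ := fun p => Complex.measurableEquivRealProd.symm p with hzdef
  set Φ : ℝ × ℝ → EuclideanSpace ℝ (Fin 2) :=
    fun p => e.symm (rotation a ((‖x‖ : ℂ) + z p)) with hPhidef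
  have hz_re : ∀ p : ℝ × ℝ, (z p).re = p.1 := fun p => rfl
  have hz_im : ∀ p : ℝ × ℝ, (z p).im = p.2 := fun p => rfl
  have hrot : ∀ w : ℂ, rotation a w = c * w := fun w => rfl
  have hxne : ((‖x‖ : ℝ) : ℂ) ≠ 0 := by exact_mod_cast hx.ne'
  have hcmul : c * (‖x‖ : ℂ) = xc := by
    rw [hcdef, div_mul_cancel₀ _ hxne]
  have fact1 : ∀ p : ℝ × ℝ, ‖Φ p - x‖ ^ 2 = p.1 ^ 2 + p.2 ^ 2 := by
    intro p
    have hx2 : e.symm xc = x := e.symm_apply_apply x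
    have : Φ p - x = e.symm (c * z p) := by
      calc Φ p - x = e.symm (c * ((‖x‖ : ℂ) + z p)) - e.symm xc := by rw [hx2]; rfl
        _ = e.symm (c * ((‖x‖ : ℂ) + z p) - xc) := (e.symm.map_sub _ _).symm
        _ = e.symm (c * z p) := by rw [mul_add, hcmul]; congr 1; ring
    have h1 : Complex.normSq c = 1 := by rw [← Complex.sq_norm, hcabs]; norm_num
    rw [this, e.symm.norm_map, Complex.sq_norm, Complex.normSq_mul, h1,
      one_mul, Complex.normSq_apply, hz_re, hz_im]
    ring
  refine ⟨Φ, fact1, ?_, ?_⟩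
  · intro p
    have : Φ p = e.symm (c * ((‖x‖ : ℂ) + z p)) := rfl
    rw [this, e.symm.norm_map, norm_mul, hcabs, one_mul, Complex.norm_def,
      Complex.normSq_apply]
    congr 1
    simp only [Complex.add_re, Complex.add_im, Complex.ofReal_re, Complex.ofReal_im, hz_re, hz_im]
    ring
  · have hmp : MeasurePreserving Φ volume volume := by
      refine MeasurePreserving.comp (e.symm.measurePreserving) ?_
      refine MeasurePreserving.comp ((rotation a).measurePreserving) ?_
      exact MeasurePreserving.comp (measurePreserving_add_left volume ((‖x‖ : ℝ) : ℂ))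
        Complex.volume_preserving_equiv_real_prod.symm
    have hemb : MeasurableEmbedding Φ := by
      refine MeasurableEmbedding.comp (e.symm.toHomeomorph.measurableEmbedding) ?_
      refine MeasurableEmbedding.comp ((rotation a).toHomeomorph.measurableEmbedding) ?_
      exact MeasurableEmbedding.comp ((Homeomorph.addLeft ((‖x‖ : ℝ) : ℂ)).measurableEmbedding)
        (Complex.measurableEquivRealProd.symm.measurableEmbedding)
    have hpre : Φ ⁻¹' (ball x t) = {p : ℝ × ℝ | p.1 ^ 2 + p.2 ^ 2 < t ^ 2} := by
      ext p
      simp only [mem_preimage, mem_ball, dist_eq_norm, mem_setOf_eq]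
      rw [← fact1 p]
      constructor
      · intro h
        have h0 : (0:ℝ) ≤ ‖Φ p - x‖ := norm_nonneg _
        nlinarith
      · intro h
        have h0 : (0:ℝ) ≤ ‖Φ p - x‖ := norm_nonneg _
        nlinarith
    have := hmp.setLIntegral_comp_preimage_emb hemb F (ball x t)
    rw [hpre] at this
    exact this.symm

end Stmt7Aux

open Stmt7Aux in
/-- The estimate of the term `I₁` in the proof of Lemma `lm1`: for radial-type decaying data
`|u₀(y)| ≤ A |y|^{-1/2-α}` for `|y| > R`, the integral
`(1/(2πt)) ∫_{B(x,t)} |u₀(y)| / √(t² - |y-x|²) dy` is bounded by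
`C A |x|^{-1/2} (|x| - t)^{-α}` whenever `|x| > R + t`, with `C` depending only on `α`. -/
theorem stmt_7 (α : ℝ) (hα : 0 < α) (hα' : α < 1 / 2) :
    ∃ C : ℝ, 0 < C ∧
      ∀ (R A : ℝ), 0 < R → 0 < A →
      ∀ u₀ : EuclideanSpace ℝ (Fin 2) → ℝ, Measurable u₀ →
      (∀ y : EuclideanSpace ℝ (Fin 2), R < ‖y‖ → |u₀ y| ≤ A * ‖y‖ ^ (-(1 / 2) - α)) →
      ∀ (t : ℝ) (x : EuclideanSpace ℝ (Fin 2)), 0 < t → R + t < ‖x‖ →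
        ENNReal.ofReal (1 / (2 * Real.pi * t)) *
            ∫⁻ y in Metric.ball x t,
              ENNReal.ofReal (|u₀ y| / Real.sqrt (t ^ 2 - ‖y - x‖ ^ 2)) ≤
          ENNReal.ofReal (C * A * ‖x‖ ^ (-(1 / 2) : ℝ) * (‖x‖ - t) ^ (-α)) := by
  refine ⟨8, by norm_num, ?_⟩
  intro R A hR hA u₀ hu₀m hu₀ t x ht hx
  have hπ : 0 < Real.pi := Real.pi_pos
  have hπ3 : 3 < Real.pi := Real.pi_gt_three
  set ρ := ‖x‖ with hρdef
  have hρ0 : 0 < ρ := by linarith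
  have htρ : t < ρ := by linarith
  have hrt : 0 < ρ - t := by linarith
  have hRrt : R < ρ - t := by linarith
  have h22 : Real.sqrt 2 * Real.sqrt 2 = 2 := Real.mul_self_sqrt (by norm_num)
  have hy_norm : ∀ y ∈ ball x t, ρ - t < ‖y‖ := by
    intro y hy
    have h1 : ‖y - x‖ < t := by rw [mem_ball, dist_eq_norm] at hy; exact hy
    have h2 : ρ ≤ ‖y‖ + ‖y - x‖ := by
      have hxx : x = y - (y - x) := (sub_sub_cancel y x).symm
      calc ρ = ‖y - (y - x)‖ := by rw [hρdef, ← hxx]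
        _ ≤ ‖y‖ + ‖y - x‖ := norm_sub_le _ _
    linarith
  have hsqrt_pos : ∀ y ∈ ball x t, 0 < Real.sqrt (t ^ 2 - ‖y - x‖ ^ 2) := by
    intro y hy
    have h1 : ‖y - x‖ < t := by rw [mem_ball, dist_eq_norm] at hy; exact hy
    have h0 : (0:ℝ) ≤ ‖y - x‖ := norm_nonneg _
    exact Real.sqrt_pos.2 (by nlinarith)
  -- Bound A: kernel integral
  have boundA : ∫⁻ y in ball x t, ENNReal.ofReal (1 / Real.sqrt (t ^ 2 - ‖y - x‖ ^ 2))
      ≤ ENNReal.ofReal (8 * Real.sqrt 2 * t) := by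
    obtain ⟨Φ, hΦ1, hΦ2, hΦ3⟩ := L4 hρ0 ht
      (fun y => ENNReal.ofReal (1 / Real.sqrt (t ^ 2 - ‖y - x‖ ^ 2)))
    rw [hΦ3]
    have hSm : MeasurableSet {p : ℝ × ℝ | p.1 ^ 2 + p.2 ^ 2 < t ^ 2} := by
      apply measurableSet_lt <;> fun_prop
    have heq : ∫⁻ p in {p : ℝ × ℝ | p.1 ^ 2 + p.2 ^ 2 < t ^ 2},
        ENNReal.ofReal (1 / Real.sqrt (t ^ 2 - ‖Φ p - x‖ ^ 2))
        = ∫⁻ p in {p : ℝ × ℝ | p.1 ^ 2 + p.2 ^ 2 < t ^ 2},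
        ENNReal.ofReal ((fun _ : ℝ => (1:ℝ)) p.2 / Real.sqrt (t ^ 2 - p.1 ^ 2 - p.2 ^ 2)) := by
      refine setLIntegral_congr_fun hSm (fun p hp => ?_)
      rw [hΦ1 p, show t ^ 2 - (p.1 ^ 2 + p.2 ^ 2) = t ^ 2 - p.1 ^ 2 - p.2 ^ 2 by ring]
    rw [heq]
    refine le_trans (L3 ht (fun _ => (1:ℝ)) measurable_const (fun _ => zero_le_one)) ?_
    have hvol : ∫⁻ v in Ioo (-t) t, ENNReal.ofReal ((1:ℝ)) = ENNReal.ofReal (2 * t) := by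
      simp only [ENNReal.ofReal_one]
      rw [setLIntegral_one, Real.volume_Ioo]
      congr 1
      ring
    rw [hvol, ← ENNReal.ofReal_mul (by positivity)]
    exact ENNReal.ofReal_le_ofReal (le_of_eq (by ring))
  -- Bound B: weighted integral
  have boundB : ∫⁻ y in ball x t,
        ENNReal.ofReal (‖y‖ ^ (-(1/2) : ℝ) / Real.sqrt (t ^ 2 - ‖y - x‖ ^ 2))
      ≤ ENNReal.ofReal (16 * Real.sqrt 2 * Real.sqrt t) := by
    obtain ⟨Φ, hΦ1, hΦ2, hΦ3⟩ := L4 hρ0 ht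
      (fun y => ENNReal.ofReal (‖y‖ ^ (-(1/2) : ℝ) / Real.sqrt (t ^ 2 - ‖y - x‖ ^ 2)))
    rw [hΦ3]
    have hSm : MeasurableSet {p : ℝ × ℝ | p.1 ^ 2 + p.2 ^ 2 < t ^ 2} := by
      apply measurableSet_lt <;> fun_prop
    have hnull : (volume : Measure (ℝ × ℝ)) {p : ℝ × ℝ | p.2 = 0} = 0 := by
      have : {p : ℝ × ℝ | p.2 = 0} = (univ : Set ℝ) ×ˢ ({0} : Set ℝ) := by
        ext p
        simp only [mem_setOf_eq, Set.mem_prod, mem_univ, mem_singleton_iff, true_and]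
      rw [this, Measure.volume_eq_prod, Measure.prod_prod]
      simp
    have h0 : ∀ᵐ p : ℝ × ℝ ∂volume, p.2 ≠ 0 := by
      rw [ae_iff]
      simpa using hnull
    have hae : ∀ᵐ p : ℝ × ℝ ∂(volume.restrict {p : ℝ × ℝ | p.1 ^ 2 + p.2 ^ 2 < t ^ 2}),
        ENNReal.ofReal (‖Φ p‖ ^ (-(1/2) : ℝ) / Real.sqrt (t ^ 2 - ‖Φ p - x‖ ^ 2)) ≤
        ENNReal.ofReal (|p.2| ^ (-(1/2) : ℝ) / Real.sqrt (t ^ 2 - p.1 ^ 2 - p.2 ^ 2)) := by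
      refine ((ae_restrict_of_ae h0).and (ae_restrict_mem hSm)).mono fun p hp => ?_
      obtain ⟨hp2, hpS⟩ := hp
      have habs : 0 < |p.2| := abs_pos.2 hp2
      have hle : |p.2| ≤ ‖Φ p‖ := by
        rw [hΦ2 p, ← Real.sqrt_sq_eq_abs]
        apply Real.sqrt_le_sqrt
        nlinarith [sq_nonneg (ρ + p.1)]
      have hnum : ‖Φ p‖ ^ (-(1/2) : ℝ) ≤ |p.2| ^ (-(1/2) : ℝ) :=
        Real.rpow_le_rpow_of_nonpos habs hle (by norm_num)
      rw [hΦ1 p, show t ^ 2 - (p.1 ^ 2 + p.2 ^ 2) = t ^ 2 - p.1 ^ 2 - p.2 ^ 2 by ring]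
      apply ENNReal.ofReal_le_ofReal
      gcongr
    refine le_trans (lintegral_mono_ae hae) ?_
    refine le_trans (L3 ht (fun v => |v| ^ (-(1/2) : ℝ))
      (by fun_prop) (fun v => Real.rpow_nonneg (abs_nonneg v) _)) ?_
    refine le_trans (mul_le_mul_right (L1 ht) _) ?_
    rw [← ENNReal.ofReal_mul (by positivity)]
    exact ENNReal.ofReal_le_ofReal (le_of_eq (by ring))
  -- pointwise bounds on the main integrand
  set I := ∫⁻ y in ball x t, ENNReal.ofReal (|u₀ y| / Real.sqrt (t ^ 2 - ‖y - x‖ ^ 2)) with hIdef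
  have hptA : I ≤ ENNReal.ofReal (A * (ρ - t) ^ (-(1/2) - α)) *
      ∫⁻ y in ball x t, ENNReal.ofReal (1 / Real.sqrt (t ^ 2 - ‖y - x‖ ^ 2)) := by
    rw [← lintegral_const_mul' _ _ ENNReal.ofReal_ne_top]
    refine lintegral_mono_ae (ae_restrict_of_forall_mem measurableSet_ball fun y hy => ?_)
    rw [← ENNReal.ofReal_mul (by positivity)]
    apply ENNReal.ofReal_le_ofReal
    have h1 : ρ - t < ‖y‖ := hy_norm y hy
    have h2 : |u₀ y| ≤ A * ‖y‖ ^ (-(1/2) - α) := hu₀ y (lt_trans hRrt h1)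
    have h3 : ‖y‖ ^ (-(1/2) - α : ℝ) ≤ (ρ - t) ^ (-(1/2) - α : ℝ) :=
      Real.rpow_le_rpow_of_nonpos hrt h1.le (by linarith)
    have h5 : 0 < Real.sqrt (t ^ 2 - ‖y - x‖ ^ 2) := hsqrt_pos y hy
    rw [mul_one_div]
    exact (div_le_div_iff_of_pos_right h5).2 (h2.trans (mul_le_mul_of_nonneg_left h3 hA.le))
  have hptB : I ≤ ENNReal.ofReal (A * (ρ - t) ^ (-α)) *
      ∫⁻ y in ball x t,
        ENNReal.ofReal (‖y‖ ^ (-(1/2) : ℝ) / Real.sqrt (t ^ 2 - ‖y - x‖ ^ 2)) := by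
    rw [← lintegral_const_mul' _ _ ENNReal.ofReal_ne_top]
    refine lintegral_mono_ae (ae_restrict_of_forall_mem measurableSet_ball fun y hy => ?_)
    rw [← ENNReal.ofReal_mul (by positivity)]
    apply ENNReal.ofReal_le_ofReal
    have h1 : ρ - t < ‖y‖ := hy_norm y hy
    have hy0 : 0 < ‖y‖ := lt_trans hrt h1
    have h2 : |u₀ y| ≤ A * ‖y‖ ^ (-(1/2) - α) := hu₀ y (lt_trans hRrt h1)
    have h3 : ‖y‖ ^ (-α : ℝ) ≤ (ρ - t) ^ (-α : ℝ) :=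
      Real.rpow_le_rpow_of_nonpos hrt h1.le (by linarith)
    have h5 : 0 < Real.sqrt (t ^ 2 - ‖y - x‖ ^ 2) := hsqrt_pos y hy
    have hsplit : ‖y‖ ^ (-(1/2) - α : ℝ) = ‖y‖ ^ (-α : ℝ) * ‖y‖ ^ (-(1/2) : ℝ) := by
      rw [← Real.rpow_add hy0]
      congr 1
      ring
    have hnum : |u₀ y| ≤ A * (ρ - t) ^ (-α : ℝ) * ‖y‖ ^ (-(1/2) : ℝ) := by
      refine h2.trans ?_
      rw [hsplit, ← mul_assoc]
      have hr : 0 ≤ ‖y‖ ^ (-(1/2) : ℝ) := Real.rpow_nonneg hy0.le _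
      have : A * ‖y‖ ^ (-α : ℝ) ≤ A * (ρ - t) ^ (-α : ℝ) :=
        mul_le_mul_of_nonneg_left h3 hA.le
      exact mul_le_mul_of_nonneg_right this hr
    rw [mul_div_assoc']
    exact (div_le_div_iff_of_pos_right h5).2 hnum
  -- final arithmetic
  set Y := ρ ^ (-(1/2) : ℝ) with hYdef
  set Z := (ρ - t) ^ (-α : ℝ) with hZdef
  have hY0 : 0 ≤ Y := Real.rpow_nonneg hρ0.le _
  have hZ0 : 0 ≤ Z := Real.rpow_nonneg hrt.le _
  have hhalf : ∀ s : ℝ, 0 < s → ρ ≤ 2 * s → s ^ (-(1/2) : ℝ) ≤ Real.sqrt 2 * Y := by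
    intro s hs hρs
    have h1 : s ^ (-(1/2) : ℝ) = 1 / Real.sqrt s := rpow_neg_half_eq s hs.le
    have h2 : Y = 1 / Real.sqrt ρ := rpow_neg_half_eq ρ hρ0.le
    rw [h1, h2]
    have hsρ : Real.sqrt ρ ≤ Real.sqrt 2 * Real.sqrt s := by
      rw [← Real.sqrt_mul (by norm_num : (0:ℝ) ≤ 2)]
      exact Real.sqrt_le_sqrt hρs
    have hsq : 0 < Real.sqrt s := Real.sqrt_pos.2 hs
    have hsqρ : 0 < Real.sqrt ρ := Real.sqrt_pos.2 hρ0
    rw [mul_one_div, div_le_div_iff₀ hsq hsqρ, one_mul]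
    exact hsρ
  by_cases hcase : t ≤ ρ / 2
  · -- use bound A
    have hmain : ENNReal.ofReal (1 / (2 * Real.pi * t)) * I ≤
        ENNReal.ofReal ((1 / (2 * Real.pi * t)) * (A * (ρ - t) ^ (-(1/2) - α) * (8 * Real.sqrt 2 * t))) := by
      rw [ENNReal.ofReal_mul (by positivity), ENNReal.ofReal_mul (by positivity)]
      exact mul_le_mul_right (hptA.trans (mul_le_mul_right boundA _)) _
    refine hmain.trans (ENNReal.ofReal_le_ofReal ?_)
    have hX : (ρ - t) ^ (-(1/2) : ℝ) ≤ Real.sqrt 2 * Y := hhalf (ρ - t) hrt (by linarith)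
    have hXZ : (ρ - t) ^ (-(1/2) - α : ℝ) = (ρ - t) ^ (-(1/2) : ℝ) * Z := by
      rw [hZdef, ← Real.rpow_add hrt]
      congr 1
    set X := (ρ - t) ^ (-(1/2) : ℝ) with hXdef
    have hX0 : 0 ≤ X := Real.rpow_nonneg hrt.le _
    have hcalc : (1 / (2 * Real.pi * t)) * (A * (ρ - t) ^ (-(1/2) - α) * (8 * Real.sqrt 2 * t))
        = (4 * Real.sqrt 2 / Real.pi) * A * (X * Z) := by
      rw [hXZ]
      field_simp
      ring
    rw [hcalc]
    have hkey : (4 * Real.sqrt 2 / Real.pi) * X ≤ 8 * Y := by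
      have s2 : (0:ℝ) < Real.sqrt 2 := Real.sqrt_pos.2 (by norm_num)
      calc (4 * Real.sqrt 2 / Real.pi) * X ≤ (4 * Real.sqrt 2 / Real.pi) * (Real.sqrt 2 * Y) :=
            mul_le_mul_of_nonneg_left hX (by positivity)
        _ = (8 / Real.pi) * Y := by
            rw [show (4 * Real.sqrt 2 / Real.pi) * (Real.sqrt 2 * Y)
              = (4 * (Real.sqrt 2 * Real.sqrt 2) / Real.pi) * Y by ring, h22]
            norm_num
        _ ≤ 8 * Y := by
            apply mul_le_mul_of_nonneg_right _ hY0
            rw [div_le_iff₀ hπ]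
            nlinarith
    calc (4 * Real.sqrt 2 / Real.pi) * A * (X * Z) = (A * Z) * ((4 * Real.sqrt 2 / Real.pi) * X) := by ring
      _ ≤ (A * Z) * (8 * Y) := mul_le_mul_of_nonneg_left hkey (by positivity)
      _ = 8 * A * Y * Z := by ring
  · -- use bound B
    push_neg at hcase
    have hmain : ENNReal.ofReal (1 / (2 * Real.pi * t)) * I ≤
        ENNReal.ofReal ((1 / (2 * Real.pi * t)) * (A * (ρ - t) ^ (-α) * (16 * Real.sqrt 2 * Real.sqrt t))) := by
      rw [ENNReal.ofReal_mul (by positivity), ENNReal.ofReal_mul (by positivity)]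
      exact mul_le_mul_right (hptB.trans (mul_le_mul_right boundB _)) _
    refine hmain.trans (ENNReal.ofReal_le_ofReal ?_)
    set T := t ^ (-(1/2) : ℝ) with hTdef
    have hT0 : 0 ≤ T := Real.rpow_nonneg ht.le _
    have hT : T ≤ Real.sqrt 2 * Y := hhalf t ht (by linarith)
    have hst : Real.sqrt t / t = T := by
      rw [hTdef, rpow_neg_half_eq t ht.le, Real.sqrt_div_self']
    have hcalc : (1 / (2 * Real.pi * t)) * (A * (ρ - t) ^ (-α) * (16 * Real.sqrt 2 * Real.sqrt t))
        = (8 * Real.sqrt 2 / Real.pi) * A * (T * Z) := by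
      rw [← hst]
      field_simp
      ring
    rw [hcalc]
    have hkey : (8 * Real.sqrt 2 / Real.pi) * T ≤ 8 * Y := by
      have s2 : (0:ℝ) < Real.sqrt 2 := Real.sqrt_pos.2 (by norm_num)
      calc (8 * Real.sqrt 2 / Real.pi) * T ≤ (8 * Real.sqrt 2 / Real.pi) * (Real.sqrt 2 * Y) :=
            mul_le_mul_of_nonneg_left hT (by positivity)
        _ = (16 / Real.pi) * Y := by
            rw [show (8 * Real.sqrt 2 / Real.pi) * (Real.sqrt 2 * Y)
              = (8 * (Real.sqrt 2 * Real.sqrt 2) / Real.pi) * Y by ring, h22]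
            norm_num
        _ ≤ 8 * Y := by
            apply mul_le_mul_of_nonneg_right _ hY0
            rw [div_le_iff₀ hπ]
            nlinarith
    calc (8 * Real.sqrt 2 / Real.pi) * A * (T * Z) = (A * Z) * ((8 * Real.sqrt 2 / Real.pi) * T) := by ring
      _ ≤ (A * Z) * (8 * Y) := mul_le_mul_of_nonneg_left hkey (by positivity)
      _ = 8 * A * Y * Z := by ring
end

section
/- Let R, B > 0 and 0 < β < 1/2. Let F : ℝ² × [0, ∞) → ℝ be measurable with |F(y,s)| ≤ B |y|^{−5/2} (|y| − s)^{−β} whenever s ≥ 0 and |y| > R + s. Then there is a constant C = C(β), depending only on β, such that for every t > 0 and every x ∈ ℝ² with |x| > R + t, (1/(2π)) ∫₀^{t} ∫_{B(x,t−s)} |F(y,s)| / √((t−s)² − |y−x|²) dy ds ≤ C · B · |x|^{−1/2} (|x| − t)^{−β}. -/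
open MeasureTheory Set Metric

section AuxiliaryLemmas

open Real
open scoped Real ENNReal

set_option maxHeartbeats 1000000

/-- Polar coordinates change of variables for the Lebesgue integral. -/
theorem lintegral_comp_polarCoord_symm' (g : ℝ × ℝ → ℝ≥0∞) :
    (∫⁻ p, g p) = ∫⁻ q in polarCoord.target, ENNReal.ofReal q.1 * g (polarCoord.symm q) := by
  set B : ℝ × ℝ → ℝ × ℝ →L[ℝ] ℝ × ℝ := fun p =>
    LinearMap.toContinuousLinearMap (Matrix.toLin (Module.Basis.finTwoProd ℝ) (Module.Basis.finTwoProd ℝ)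
      !![Real.cos p.2, -p.1 * Real.sin p.2; Real.sin p.2, p.1 * Real.cos p.2])
  have B_det : ∀ p, (B p).det = p.1 := by
    intro p
    conv_rhs => rw [← one_mul p.1, ← Real.cos_sq_add_sin_sq p.2]
    simp only [B, neg_mul, LinearMap.det_toContinuousLinearMap, LinearMap.det_toLin,
      Matrix.det_fin_two_of, sub_neg_eq_add]
    ring
  calc
    ∫⁻ p, g p = ∫⁻ p in polarCoord.source, g p := by
      rw [← setLIntegral_univ]
      exact (setLIntegral_congr polarCoord_source_ae_eq_univ).symm
    _ = ∫⁻ p in polarCoord.symm '' polarCoord.target, g p := by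
      rw [polarCoord.symm_image_target_eq_source]
    _ = ∫⁻ q in polarCoord.target, ENNReal.ofReal |(B q).det| * g (polarCoord.symm q) := by
      apply lintegral_image_eq_lintegral_abs_det_fderiv_mul volume
        polarCoord.open_target.measurableSet
        (fun q _ => (hasFDerivAt_polarCoord_symm q).hasFDerivWithinAt)
      rw [← polarCoord.symm_source]
      exact polarCoord.symm.injOn
    _ = ∫⁻ q in polarCoord.target, ENNReal.ofReal q.1 * g (polarCoord.symm q) := by
      apply setLIntegral_congr_fun polarCoord.open_target.measurableSet
      intro q hq
      dsimp only
      rw [B_det, abs_of_pos hq.1]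

/-- `cos v - cos w ≥ (2/π²)(w² - v²)` for `-w ≤ v ≤ w ≤ π/2`. -/
theorem cos_sub_cos_lower {w v : ℝ} (hw : 0 < w) (hw2 : w ≤ π / 2)
    (hv : v ∈ Ioo (-w) w) :
    2 / π ^ 2 * ((w - v) * (w + v)) ≤ Real.cos v - Real.cos w := by
  have hπ := Real.pi_pos
  have h1 : Real.cos v - Real.cos w = 2 * Real.sin ((w + v) / 2) * Real.sin ((w - v) / 2) := by
    rw [Real.cos_sub_cos, show (v + w)/2 = (w + v)/2 by ring,
      show (v - w)/2 = -((w - v)/2) by ring, Real.sin_neg]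
    ring
  have ha1 : 0 ≤ (w + v) / 2 := by have := hv.1; linarith
  have ha2 : (w + v) / 2 ≤ π / 2 := by have := hv.2; linarith
  have hb1 : 0 ≤ (w - v) / 2 := by have := hv.2; linarith
  have hb2 : (w - v) / 2 ≤ π / 2 := by have := hv.1; linarith
  have hs1 := Real.mul_le_sin ha1 ha2
  have hs2 := Real.mul_le_sin hb1 hb2
  have key : (2 * (2 / π * ((w + v) / 2))) * (2 / π * ((w - v) / 2)) ≤
      (2 * Real.sin ((w + v) / 2)) * Real.sin ((w - v) / 2) := by
    apply mul_le_mul (by linarith) hs2 (by positivity)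
    have := le_trans (by positivity) hs1
    linarith
  rw [h1]
  refine le_trans (le_of_eq ?_) key
  field_simp

/-- `∫ 1/√(d-v)` over `(c,d)`. -/
theorem lintegral_one_div_sqrt_sub_left {c d : ℝ} (hcd : c ≤ d) :
    (∫⁻ v in Ioo c d, ENNReal.ofReal (1 / Real.sqrt (d - v))) =
      ENNReal.ofReal (2 * Real.sqrt (d - c)) := by
  have hint : IntervalIntegrable (fun v : ℝ => (d - v) ^ (-(1/2) : ℝ)) volume c d := by
    have h0 : IntervalIntegrable (fun x : ℝ => x ^ (-(1/2) : ℝ)) volume (d - d) (d - c) := by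
      apply intervalIntegral.intervalIntegrable_rpow'
      norm_num
    simpa using (h0.comp_sub_left d).symm
  have heq : ∀ v ∈ Ioo c d, 1 / Real.sqrt (d - v) = (d - v) ^ (-(1/2) : ℝ) := by
    intro v hv
    rw [Real.rpow_neg (by linarith [hv.2] : (0:ℝ) ≤ d - v), Real.sqrt_eq_rpow, one_div]
  calc
    (∫⁻ v in Ioo c d, ENNReal.ofReal (1 / Real.sqrt (d - v)))
        = ∫⁻ v in Ioo c d, ENNReal.ofReal ((d - v) ^ (-(1/2) : ℝ)) := by
      apply setLIntegral_congr_fun measurableSet_Ioo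
      intro v hv
      dsimp only
      rw [heq v hv]
    _ = ENNReal.ofReal (∫ v in Ioo c d, (d - v) ^ (-(1/2) : ℝ)) := by
      rw [← ofReal_integral_eq_lintegral_ofReal]
      · exact ((intervalIntegrable_iff_integrableOn_Ioo_of_le hcd).mp hint)
      · filter_upwards [ae_restrict_mem measurableSet_Ioo] with v hv
        exact Real.rpow_nonneg (by linarith [hv.2]) _
    _ = ENNReal.ofReal (2 * Real.sqrt (d - c)) := by
      congr 1
      rw [← MeasureTheory.integral_Ioc_eq_integral_Ioo, ← intervalIntegral.integral_of_le hcd,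
        intervalIntegral.integral_comp_sub_left (fun x : ℝ => x ^ (-(1/2) : ℝ)) d, sub_self,
        integral_rpow (Or.inl (by norm_num))]
      rw [Real.sqrt_eq_rpow]
      norm_num
      ring

/-- `∫ 1/√(v-c)` over `(c,d)`. -/
theorem lintegral_one_div_sqrt_sub_right {c d : ℝ} (hcd : c ≤ d) :
    (∫⁻ v in Ioo c d, ENNReal.ofReal (1 / Real.sqrt (v - c))) =
      ENNReal.ofReal (2 * Real.sqrt (d - c)) := by
  have hint : IntervalIntegrable (fun v : ℝ => (v - c) ^ (-(1/2) : ℝ)) volume c d := by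
    have h0 : IntervalIntegrable (fun x : ℝ => x ^ (-(1/2) : ℝ)) volume (c - c) (d - c) := by
      apply intervalIntegral.intervalIntegrable_rpow'
      norm_num
    simpa using h0.comp_sub_right c
  calc
    (∫⁻ v in Ioo c d, ENNReal.ofReal (1 / Real.sqrt (v - c)))
        = ∫⁻ v in Ioo c d, ENNReal.ofReal ((v - c) ^ (-(1/2) : ℝ)) := by
      apply setLIntegral_congr_fun measurableSet_Ioo
      intro v hv
      dsimp only
      rw [Real.rpow_neg (by linarith [hv.1] : (0:ℝ) ≤ v - c), Real.sqrt_eq_rpow, one_div]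
    _ = ENNReal.ofReal (∫ v in Ioo c d, (v - c) ^ (-(1/2) : ℝ)) := by
      rw [← ofReal_integral_eq_lintegral_ofReal]
      · exact ((intervalIntegrable_iff_integrableOn_Ioo_of_le hcd).mp hint)
      · filter_upwards [ae_restrict_mem measurableSet_Ioo] with v hv
        exact Real.rpow_nonneg (by linarith [hv.1]) _
    _ = ENNReal.ofReal (2 * Real.sqrt (d - c)) := by
      congr 1
      rw [← MeasureTheory.integral_Ioc_eq_integral_Ioo, ← intervalIntegral.integral_of_le hcd,
        intervalIntegral.integral_comp_sub_right (fun x : ℝ => x ^ (-(1/2) : ℝ)) c, sub_self,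
        integral_rpow (Or.inl (by norm_num))]
      rw [Real.sqrt_eq_rpow]
      norm_num
      ring

/-- The key angular integral estimate. -/
theorem angular_est {c φ : ℝ} (hc : 0 ≤ c) (hφ : |φ| ≤ π) :
    (∫⁻ θ in Ioo (-π) π,
        {ψ : ℝ | c < Real.cos ψ}.indicator
          (fun ψ => ENNReal.ofReal (1 / Real.sqrt (Real.cos ψ - c))) (θ - φ)) ≤
      ENNReal.ofReal (12 * π) := by
  have hπ := Real.pi_pos
  by_cases hc1 : 1 ≤ c
  · have hzero : ∀ θ : ℝ, {ψ : ℝ | c < Real.cos ψ}.indicator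
        (fun ψ => ENNReal.ofReal (1 / Real.sqrt (Real.cos ψ - c))) (θ - φ) = 0 := by
      intro θ
      apply indicator_of_notMem
      simp only [mem_setOf_eq, not_lt]
      exact (Real.cos_le_one _).trans hc1
    simp only [hzero, lintegral_zero]
    positivity
  push_neg at hc1
  set w := Real.arccos c with hw_def
  have hw0 : 0 < w := Real.arccos_pos.2 hc1
  have hw2 : w ≤ π / 2 := Real.arccos_le_pi_div_two.2 hc
  have hcw : Real.cos w = c := Real.cos_arccos (by linarith) hc1.le
  set g : ℝ → ℝ≥0∞ := (Ioo (-w) w).indicator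
    (fun v => ENNReal.ofReal (π / Real.sqrt (2 * w * (w - v))) +
      ENNReal.ofReal (π / Real.sqrt (2 * w * (w + v)))) with hg_def
  have hg_meas : Measurable g := by
    apply Measurable.indicator _ measurableSet_Ioo
    apply Measurable.fun_add
    · exact ENNReal.measurable_ofReal.comp
        (measurable_const.div ((continuous_const.mul
          (continuous_const.sub continuous_id)).sqrt.measurable))
    · exact ENNReal.measurable_ofReal.comp
        (measurable_const.div ((continuous_const.mul
          (continuous_const.add continuous_id)).sqrt.measurable))
  -- helper : pointwise bound
  have helper : ∀ ψ v : ℝ, c < Real.cos ψ → v ∈ Ioo (-w) w → Real.cos ψ = Real.cos v →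
      ENNReal.ofReal (1 / Real.sqrt (Real.cos ψ - c)) ≤ g v := by
    intro ψ v hψ hv hcos
    have hlow : 2 / π ^ 2 * ((w - v) * (w + v)) ≤ Real.cos ψ - c := by
      rw [hcos, ← hcw]
      exact cos_sub_cos_lower hw0 hw2 hv
    have hwv1 : 0 < w - v := by have := hv.2; linarith
    have hwv2 : 0 < w + v := by have := hv.1; linarith
    have hbound : ∀ z : ℝ, 0 < z → 2 * w * z / π ^ 2 ≤ Real.cos ψ - c →
        ENNReal.ofReal (1 / Real.sqrt (Real.cos ψ - c)) ≤
          ENNReal.ofReal (π / Real.sqrt (2 * w * z)) := by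
      intro z hz h1
      apply ENNReal.ofReal_le_ofReal
      have hs : Real.sqrt (2 * w * z) / π ≤ Real.sqrt (Real.cos ψ - c) := by
        have h2 := Real.sqrt_le_sqrt h1
        rwa [Real.sqrt_div (by positivity), Real.sqrt_sq hπ.le] at h2
      have hd : (0:ℝ) < Real.sqrt (2 * w * z) := Real.sqrt_pos.2 (by positivity)
      have h3 := one_div_le_one_div_of_le (by positivity) hs
      rwa [one_div_div] at h3
    rw [hg_def, indicator_of_mem hv]
    rcases le_total 0 v with h0v | h0v
    · refine le_trans (hbound (w - v) hwv1 ?_) le_self_add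
      refine le_trans ?_ hlow
      have hww : w ≤ w + v := by linarith
      have h2 : (0:ℝ) ≤ 2 * (w - v) / π ^ 2 := by positivity
      have h3 := mul_le_mul_of_nonneg_left hww h2
      calc 2 * w * (w - v) / π ^ 2 = 2 * (w - v) / π ^ 2 * w := by ring
        _ ≤ 2 * (w - v) / π ^ 2 * (w + v) := h3
        _ = 2 / π ^ 2 * ((w - v) * (w + v)) := by ring
    · refine le_trans (hbound (w + v) hwv2 ?_) le_add_self
      refine le_trans ?_ hlow
      have hww : w ≤ w - v := by linarith
      have h2 : (0:ℝ) ≤ 2 * (w + v) / π ^ 2 := by positivity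
      have h3 := mul_le_mul_of_nonneg_left hww h2
      calc 2 * w * (w + v) / π ^ 2 = 2 * (w + v) / π ^ 2 * w := by ring
        _ ≤ 2 * (w + v) / π ^ 2 * (w - v) := h3
        _ = 2 / π ^ 2 * ((w - v) * (w + v)) := by ring
  -- locate v in (-w,w) modulo 2π
  have hwpi : w ≤ π := by linarith
  have habs : ∀ ψ : ℝ, -π ≤ ψ → ψ ≤ π → c < Real.cos ψ → ψ ∈ Ioo (-w) w := by
    intro ψ h1 h2 hψ
    have h3 : |ψ| < w := by
      by_contra hcon
      push_neg at hcon
      have h4 : Real.cos |ψ| ≤ Real.cos w := by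
        apply Real.cos_le_cos_of_nonneg_of_le_pi hw0.le (abs_le.2 ⟨h1, h2⟩) hcon
      rw [Real.cos_abs, hcw] at h4
      linarith
    exact abs_lt.mp h3
  have key : ∀ θ ∈ Ioo (-π) π,
      {ψ : ℝ | c < Real.cos ψ}.indicator
        (fun ψ => ENNReal.ofReal (1 / Real.sqrt (Real.cos ψ - c))) (θ - φ) ≤
      g (θ - φ) + g (θ - φ - 2 * π) + g (θ - φ + 2 * π) := by
    intro θ hθ
    set ψ := θ - φ with hψ_def
    by_cases hmem : c < Real.cos ψ
    · rw [indicator_of_mem (by exact hmem : ψ ∈ {ψ : ℝ | c < Real.cos ψ})]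
      have hφ' := abs_le.mp hφ
      have hr1 : -2 * π < ψ := by have := hθ.1; simp only [hψ_def]; linarith
      have hr2 : ψ < 2 * π := by have := hθ.2; simp only [hψ_def]; linarith
      rcases le_total ψ (-π) with hcase | hcase
      · -- use v = ψ + 2π
        have hcos : Real.cos ψ = Real.cos (ψ + 2 * π) := (Real.cos_add_two_pi ψ).symm
        have hvmem : ψ + 2 * π ∈ Ioo (-w) w := by
          apply habs _ (by linarith) (by linarith)
          rw [← hcos]; exact hmem
        calc ENNReal.ofReal (1 / Real.sqrt (Real.cos ψ - c)) ≤ g (ψ + 2 * π) := by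
              rw [hcos] at hmem ⊢; exact helper _ _ hmem hvmem rfl
          _ ≤ g ψ + g (ψ - 2 * π) + g (ψ + 2 * π) := le_add_self
      rcases le_total π ψ with hcase2 | hcase2
      · -- use v = ψ - 2π
        have hcos : Real.cos ψ = Real.cos (ψ - 2 * π) := (Real.cos_sub_two_pi ψ).symm
        have hvmem : ψ - 2 * π ∈ Ioo (-w) w := by
          apply habs _ (by linarith) (by linarith)
          rw [← hcos]; exact hmem
        calc ENNReal.ofReal (1 / Real.sqrt (Real.cos ψ - c)) ≤ g (ψ - 2 * π) := by
              rw [hcos] at hmem ⊢; exact helper _ _ hmem hvmem rfl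
          _ ≤ g ψ + g (ψ - 2 * π) + g (ψ + 2 * π) := le_trans le_add_self le_self_add
      · -- use v = ψ
        have hvmem : ψ ∈ Ioo (-w) w := habs _ hcase hcase2 hmem
        calc ENNReal.ofReal (1 / Real.sqrt (Real.cos ψ - c)) ≤ g ψ :=
              helper _ _ hmem hvmem rfl
          _ ≤ g ψ + g (ψ - 2 * π) + g (ψ + 2 * π) := le_trans le_self_add le_self_add
    · rw [indicator_of_notMem (show ψ ∉ {ψ : ℝ | c < Real.cos ψ} from hmem)]
      exact zero_le
  -- the value of ∫⁻ g
  have hg_int : (∫⁻ v, g v) ≤ ENNReal.ofReal (4 * π) := by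
    rw [hg_def, lintegral_indicator measurableSet_Ioo]
    have hsplit : ∀ v : ℝ, v ∈ Ioo (-w) w →
        (ENNReal.ofReal (π / Real.sqrt (2 * w * (w - v))) +
          ENNReal.ofReal (π / Real.sqrt (2 * w * (w + v)))) =
        ENNReal.ofReal (π / Real.sqrt (2 * w)) *
            ENNReal.ofReal (1 / Real.sqrt (w - v)) +
          ENNReal.ofReal (π / Real.sqrt (2 * w)) *
            ENNReal.ofReal (1 / Real.sqrt (w + v)) := by
      intro v hv
      have h1 : 0 < w - v := by have := hv.2; linarith
      have h2 : 0 < w + v := by have := hv.1; linarith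
      congr 1
      · rw [← ENNReal.ofReal_mul (by positivity), Real.sqrt_mul (by positivity)]
        congr 1
        field_simp
      · rw [← ENNReal.ofReal_mul (by positivity), Real.sqrt_mul (by positivity)]
        congr 1
        field_simp
    rw [setLIntegral_congr_fun measurableSet_Ioo
      (by intro v hv; exact hsplit v hv)]
    rw [lintegral_add_left (by fun_prop)]
    rw [lintegral_const_mul' _ _ ENNReal.ofReal_ne_top,
      lintegral_const_mul' _ _ ENNReal.ofReal_ne_top]
    have e1 : (∫⁻ v in Ioo (-w) w, ENNReal.ofReal (1 / Real.sqrt (w - v))) =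
        ENNReal.ofReal (2 * Real.sqrt (2 * w)) := by
      have h := lintegral_one_div_sqrt_sub_left (by linarith : -w ≤ w)
      rw [show w - -w = 2*w by ring] at h
      exact h
    have e2 : (∫⁻ v in Ioo (-w) w, ENNReal.ofReal (1 / Real.sqrt (w + v))) =
        ENNReal.ofReal (2 * Real.sqrt (2 * w)) := by
      have h := lintegral_one_div_sqrt_sub_right (by linarith : -w ≤ w)
      rw [show w - -w = 2*w by ring] at h
      rw [← h]
      apply setLIntegral_congr_fun measurableSet_Ioo
      intro v hv
      dsimp only
      rw [show v - -w = w + v by ring]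
    rw [e1, e2, ← ENNReal.ofReal_mul (by positivity), ← ENNReal.ofReal_add (by positivity) (by positivity)]
    apply ENNReal.ofReal_le_ofReal
    have hsq : (0:ℝ) < Real.sqrt (2 * w) := Real.sqrt_pos.2 (by positivity)
    have hval : π / Real.sqrt (2*w) * (2 * Real.sqrt (2*w)) = 2 * π := by
      field_simp
    rw [hval]
    linarith
  calc (∫⁻ θ in Ioo (-π) π,
        {ψ : ℝ | c < Real.cos ψ}.indicator
          (fun ψ => ENNReal.ofReal (1 / Real.sqrt (Real.cos ψ - c))) (θ - φ))
      ≤ ∫⁻ θ in Ioo (-π) π, (g (θ - φ) + g (θ - φ - 2 * π) + g (θ - φ + 2 * π)) :=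
        setLIntegral_mono' measurableSet_Ioo key
    _ ≤ ∫⁻ θ, (g (θ - φ) + g (θ - φ - 2 * π) + g (θ - φ + 2 * π)) :=
        setLIntegral_le_lintegral _ _
    _ = (∫⁻ θ, g (θ - φ)) + (∫⁻ θ, g (θ - φ - 2 * π)) + (∫⁻ θ, g (θ - φ + 2 * π)) := by
      rw [lintegral_add_left (by fun_prop), lintegral_add_left (by fun_prop)]
    _ = (∫⁻ v, g v) + (∫⁻ v, g v) + (∫⁻ v, g v) := by
      rw [lintegral_sub_right_eq_self g φ]
      congr 1
      congr 1
      · simp only [show ∀ θ:ℝ, θ - φ - 2*π = θ - (φ + 2*π) from fun θ => by ring]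
        exact lintegral_sub_right_eq_self g (φ + 2*π)
      · simp only [show ∀ θ:ℝ, θ - φ + 2*π = θ - (φ - 2*π) from fun θ => by ring]
        exact lintegral_sub_right_eq_self g (φ - 2*π)
    _ ≤ ENNReal.ofReal (4*π) + ENNReal.ofReal (4*π) + ENNReal.ofReal (4*π) := by
      gcongr <;> exact hg_int
    _ = ENNReal.ofReal (12 * π) := by
      rw [← ENNReal.ofReal_add (by positivity) (by positivity),
        ← ENNReal.ofReal_add (by positivity) (by positivity)]
      ring_nf

/-- The inner (spatial) integral estimate, on `ℝ × ℝ`. -/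
theorem inner_est {B β a u s : ℝ} (x' : ℝ × ℝ) (ha : Real.sqrt (x'.1 ^ 2 + x'.2 ^ 2) = a)
    (hu : 0 < u) (hua : u < a) (hs : 0 ≤ s) (hsau : s < a - u) (hB : 0 < B) (hβ : 0 < β) :
    (∫⁻ p in {p : ℝ × ℝ | (p.1 - x'.1) ^ 2 + (p.2 - x'.2) ^ 2 < u ^ 2},
      ENNReal.ofReal (B * Real.sqrt (p.1 ^ 2 + p.2 ^ 2) ^ (-(5 / 2) : ℝ) *
          (Real.sqrt (p.1 ^ 2 + p.2 ^ 2) - s) ^ (-β) /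
        Real.sqrt (u ^ 2 - ((p.1 - x'.1) ^ 2 + (p.2 - x'.2) ^ 2)))) ≤
      ENNReal.ofReal (12 * π * B / Real.sqrt (2 * a)) *
        ∫⁻ r in Ioi (a - u), ENNReal.ofReal (r ^ (-(2 : ℝ)) * (r - s) ^ (-β)) := by
  have hπ := Real.pi_pos
  have ha0 : 0 < a := lt_trans hu hua
  have hE : x'.1 ^ 2 + x'.2 ^ 2 = a ^ 2 := by
    rw [← ha, Real.sq_sqrt (by positivity)]
  -- the angle of x'
  set z : ℂ := x'.1 + x'.2 * Complex.I with hz_def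
  have habsz : ‖z‖ = a := by
    rw [Complex.norm_def, Complex.normSq_add_mul_I, hE, Real.sqrt_sq ha0.le]
  have hz0 : z ≠ 0 := by
    intro h
    rw [h] at habsz
    simp at habsz
    exact ha0.ne' habsz.symm
  set φ : ℝ := Complex.arg z with hφ_def
  have hφ : |φ| ≤ π := Complex.abs_arg_le_pi z
  have hx1 : x'.1 = a * Real.cos φ := by
    have := Complex.cos_arg hz0
    rw [habsz] at this
    simp only [hz_def, Complex.add_re, Complex.ofReal_re, Complex.mul_re, Complex.I_re,
      Complex.ofReal_im, Complex.I_im] at this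
    field_simp at this
    linarith [this]
  have hx2 : x'.2 = a * Real.sin φ := by
    have := Complex.sin_arg z
    rw [habsz] at this
    simp only [hz_def, Complex.add_im, Complex.ofReal_im, Complex.mul_im, Complex.I_im,
      Complex.ofReal_re, Complex.I_re] at this
    field_simp at this
    linarith [this]
  -- names for the sets and functions
  set S : Set (ℝ × ℝ) := {p : ℝ × ℝ | (p.1 - x'.1) ^ 2 + (p.2 - x'.2) ^ 2 < u ^ 2} with hS_def
  have hSm : MeasurableSet S := by
    apply measurableSet_lt _ measurable_const
    fun_prop
  set G : ℝ × ℝ → ℝ≥0∞ := fun p =>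
    ENNReal.ofReal (B * Real.sqrt (p.1 ^ 2 + p.2 ^ 2) ^ (-(5 / 2) : ℝ) *
        (Real.sqrt (p.1 ^ 2 + p.2 ^ 2) - s) ^ (-β) /
      Real.sqrt (u ^ 2 - ((p.1 - x'.1) ^ 2 + (p.2 - x'.2) ^ 2))) with hG_def
  have hGm : Measurable G := by fun_prop
  -- pass to polar coordinates
  rw [← lintegral_indicator hSm]
  rw [lintegral_comp_polarCoord_symm' (S.indicator G)]
  rw [polarCoord_target, Measure.volume_eq_prod, ← Measure.prod_restrict]
  rw [lintegral_prod _ (by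
    apply Measurable.aemeasurable
    apply Measurable.fun_mul
    · exact ENNReal.measurable_ofReal.comp measurable_fst
    · apply (hGm.indicator hSm).comp
      have : Continuous (fun q : ℝ × ℝ => (q.1 * Real.cos q.2, q.1 * Real.sin q.2)) := by
        fun_prop
      have heq : (⇑polarCoord.symm : ℝ × ℝ → ℝ × ℝ) =
          fun q : ℝ × ℝ => (q.1 * Real.cos q.2, q.1 * Real.sin q.2) := by
        funext q
        exact polarCoord_symm_apply q
      rw [heq]
      exact this.measurable)]
  -- now a double integral over r ∈ Ioi 0, θ ∈ Ioo (-π) π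
  have main : ∀ r ∈ Ioi (0:ℝ),
      (∫⁻ θ in Ioo (-π) π, ENNReal.ofReal (r, θ).1 * S.indicator G (polarCoord.symm (r, θ))) ≤
      (Ioi (a - u)).indicator
        (fun r => ENNReal.ofReal (12 * π * B / Real.sqrt (2 * a) *
          (r ^ (-(2 : ℝ)) * (r - s) ^ (-β)))) r := by
    intro r hr
    rw [mem_Ioi] at hr
    -- the point in the plane
    have hpt : ∀ θ : ℝ, polarCoord.symm (r, θ) = (r * Real.cos θ, r * Real.sin θ) :=
      fun θ => polarCoord_symm_apply (r, θ)
    have hnorm : ∀ θ : ℝ, ((r * Real.cos θ) ^ 2 + (r * Real.sin θ) ^ 2) = r ^ 2 := by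
      intro θ
      have := Real.sin_sq_add_cos_sq θ
      ring_nf
      nlinarith [this]
    have hdist : ∀ θ : ℝ, ((r * Real.cos θ - x'.1) ^ 2 + (r * Real.sin θ - x'.2) ^ 2) =
        r ^ 2 + a ^ 2 - 2 * a * r * Real.cos (θ - φ) := by
      intro θ
      rw [hx1, hx2, Real.cos_sub]
      have hc := Real.sin_sq_add_cos_sq θ
      have hc2 := Real.sin_sq_add_cos_sq φ
      ring_nf
      nlinarith [hc, hc2]
    by_cases hcase : r ≤ a - u
    · -- the ball does not meet this circle
      have hzero : ∀ θ : ℝ, S.indicator G (polarCoord.symm (r, θ)) = 0 := by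
        intro θ
        rw [hpt θ]
        apply indicator_of_notMem
        simp only [hS_def, mem_setOf_eq, not_lt]
        rw [hdist θ]
        have h1 : Real.cos (θ - φ) ≤ 1 := Real.cos_le_one _
        have h2 : 2 * a * r * Real.cos (θ - φ) ≤ 2 * a * r * 1 :=
          mul_le_mul_of_nonneg_left h1 (by positivity)
        have h3 : u ≤ a - r := by linarith
        nlinarith [h2, h3, hu]
      simp only [hzero, mul_zero, lintegral_zero]
      exact zero_le
    · push_neg at hcase
      set c : ℝ := (r ^ 2 + a ^ 2 - u ^ 2) / (2 * a * r) with hc_def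
      have h2ar : (0:ℝ) < 2 * a * r := by positivity
      have hc0 : 0 ≤ c := by
        apply div_nonneg _ h2ar.le
        nlinarith [hua, hu]
      have hrs : 0 < r - s := by linarith
      -- membership in S ↔ c < cos ψ
      have hmemS : ∀ θ : ℝ, ((r * Real.cos θ, r * Real.sin θ) ∈ S ↔ c < Real.cos (θ - φ)) := by
        intro θ
        simp only [hS_def, mem_setOf_eq]
        rw [hdist θ, hc_def, div_lt_iff₀ h2ar]
        constructor <;> intro h <;> nlinarith
      -- the pointwise bound
      have hpoint : ∀ θ : ℝ,
          ENNReal.ofReal r * S.indicator G (polarCoord.symm (r, θ)) ≤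
          ENNReal.ofReal (B / Real.sqrt (2 * a) * (r ^ (-(2:ℝ)) * (r - s) ^ (-β))) *
            ({ψ : ℝ | c < Real.cos ψ}.indicator
              (fun ψ => ENNReal.ofReal (1 / Real.sqrt (Real.cos ψ - c))) (θ - φ)) := by
        intro θ
        rw [hpt θ]
        by_cases hmem : (r * Real.cos θ, r * Real.sin θ) ∈ S
        · have hcos : c < Real.cos (θ - φ) := (hmemS θ).mp hmem
          rw [indicator_of_mem hmem, indicator_of_mem (by exact hcos)]
          rw [hG_def]
          simp only
          rw [hnorm θ, hdist θ, Real.sqrt_sq hr.le]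
          have hXpos : 0 < Real.cos (θ - φ) - c := by linarith
          have hDeq : u ^ 2 - (r ^ 2 + a ^ 2 - 2 * a * r * Real.cos (θ - φ)) =
              2 * a * r * (Real.cos (θ - φ) - c) := by
            rw [hc_def]
            field_simp
            ring
          rw [hDeq]
          rw [← ENNReal.ofReal_mul (by positivity), ← ENNReal.ofReal_mul (by positivity)]
          apply ENNReal.ofReal_le_ofReal
          have hsq : Real.sqrt (2 * a * r * (Real.cos (θ - φ) - c)) =
              Real.sqrt (2 * a) * Real.sqrt r * Real.sqrt (Real.cos (θ - φ) - c) := by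
            rw [show 2 * a * r * (Real.cos (θ - φ) - c) = 2 * a * (r * (Real.cos (θ - φ) - c))
                by ring, Real.sqrt_mul (by positivity), Real.sqrt_mul hr.le]
            ring
          rw [hsq]
          have hr52 : r * (r ^ (-(5/2) : ℝ)) = r ^ (-(2:ℝ)) * Real.sqrt r := by
            rw [Real.sqrt_eq_rpow]
            rw [show r * r ^ (-(5/2) : ℝ) = r ^ (1:ℝ) * r ^ (-(5/2):ℝ) by rw [Real.rpow_one]]
            rw [← Real.rpow_add hr, ← Real.rpow_add hr]
            norm_num
          have hsr : (0:ℝ) < Real.sqrt r := Real.sqrt_pos.2 hr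
          have hs2a : (0:ℝ) < Real.sqrt (2*a) := Real.sqrt_pos.2 (by positivity)
          have hsX : (0:ℝ) < Real.sqrt (Real.cos (θ - φ) - c) := Real.sqrt_pos.2 hXpos
          have key : r * (B * r ^ (-(5/2):ℝ) * (r - s) ^ (-β) /
              (Real.sqrt (2*a) * Real.sqrt r * Real.sqrt (Real.cos (θ - φ) - c))) =
              B / Real.sqrt (2*a) * (r ^ (-(2:ℝ)) * (r-s) ^ (-β)) *
                (1 / Real.sqrt (Real.cos (θ - φ) - c)) := by
            calc r * (B * r ^ (-(5/2):ℝ) * (r - s) ^ (-β) /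
                (Real.sqrt (2*a) * Real.sqrt r * Real.sqrt (Real.cos (θ - φ) - c)))
                = (r * r ^ (-(5/2):ℝ)) * (B * (r - s) ^ (-β)) /
                  (Real.sqrt (2*a) * Real.sqrt r * Real.sqrt (Real.cos (θ - φ) - c)) := by
                  ring
              _ = (r ^ (-(2:ℝ)) * Real.sqrt r) * (B * (r - s) ^ (-β)) /
                  (Real.sqrt (2*a) * Real.sqrt r * Real.sqrt (Real.cos (θ - φ) - c)) := by
                  rw [hr52]
              _ = B / Real.sqrt (2*a) * (r ^ (-(2:ℝ)) * (r-s) ^ (-β)) *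
                  (1 / Real.sqrt (Real.cos (θ - φ) - c)) := by
                  field_simp
          exact le_of_eq key
        · rw [indicator_of_notMem hmem, indicator_of_notMem
            (show (θ - φ) ∉ {ψ : ℝ | c < Real.cos ψ} from fun h => hmem ((hmemS θ).mpr h))]
          simp
      calc (∫⁻ θ in Ioo (-π) π, ENNReal.ofReal (r, θ).1 * S.indicator G (polarCoord.symm (r, θ)))
          ≤ ∫⁻ θ in Ioo (-π) π,
              ENNReal.ofReal (B / Real.sqrt (2 * a) * (r ^ (-(2:ℝ)) * (r - s) ^ (-β))) *
                ({ψ : ℝ | c < Real.cos ψ}.indicator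
                  (fun ψ => ENNReal.ofReal (1 / Real.sqrt (Real.cos ψ - c))) (θ - φ)) :=
            setLIntegral_mono' measurableSet_Ioo (fun θ _ => hpoint θ)
        _ = ENNReal.ofReal (B / Real.sqrt (2 * a) * (r ^ (-(2:ℝ)) * (r - s) ^ (-β))) *
              ∫⁻ θ in Ioo (-π) π, ({ψ : ℝ | c < Real.cos ψ}.indicator
                  (fun ψ => ENNReal.ofReal (1 / Real.sqrt (Real.cos ψ - c))) (θ - φ)) :=
            lintegral_const_mul' _ _ ENNReal.ofReal_ne_top
        _ ≤ ENNReal.ofReal (B / Real.sqrt (2 * a) * (r ^ (-(2:ℝ)) * (r - s) ^ (-β))) *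
              ENNReal.ofReal (12 * π) := mul_le_mul_right (angular_est hc0 hφ) _
        _ = (Ioi (a - u)).indicator
              (fun r => ENNReal.ofReal (12 * π * B / Real.sqrt (2 * a) *
                (r ^ (-(2 : ℝ)) * (r - s) ^ (-β)))) r := by
            rw [indicator_of_mem (mem_Ioi.mpr hcase)]
            rw [← ENNReal.ofReal_mul (by positivity)]
            congr 1
            ring
  calc (∫⁻ r in Ioi (0:ℝ), ∫⁻ θ in Ioo (-π) π,
          ENNReal.ofReal (r, θ).1 * S.indicator G (polarCoord.symm (r, θ)))
      ≤ ∫⁻ r in Ioi (0:ℝ), (Ioi (a - u)).indicator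
          (fun r => ENNReal.ofReal (12 * π * B / Real.sqrt (2 * a) *
            (r ^ (-(2 : ℝ)) * (r - s) ^ (-β)))) r :=
        setLIntegral_mono' measurableSet_Ioi main
    _ = ∫⁻ r in Ioi (a - u), ENNReal.ofReal (12 * π * B / Real.sqrt (2 * a) *
          (r ^ (-(2 : ℝ)) * (r - s) ^ (-β))) := by
        rw [lintegral_indicator measurableSet_Ioi, Measure.restrict_restrict measurableSet_Ioi]
        rw [Ioi_inter_Ioi, max_eq_left (by linarith : (0:ℝ) ≤ a - u)]
    _ = ENNReal.ofReal (12 * π * B / Real.sqrt (2 * a)) *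
          ∫⁻ r in Ioi (a - u), ENNReal.ofReal (r ^ (-(2 : ℝ)) * (r - s) ^ (-β)) := by
        rw [← lintegral_const_mul' _ _ ENNReal.ofReal_ne_top]
        apply setLIntegral_congr_fun measurableSet_Ioi
        intro r hr
        dsimp only
        rw [← ENNReal.ofReal_mul (by positivity)]

/-- The outer (time) integral estimate. -/
theorem outer_est {β t d : ℝ} (hβ : 0 < β) (hβ1 : β < 1) (ht : 0 < t) (hd : 0 < d) :
    (∫⁻ s in Ioo 0 t, ∫⁻ r in Ioi (d + s), ENNReal.ofReal (r ^ (-(2:ℝ)) * (r - s) ^ (-β))) ≤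
      ENNReal.ofReal (d ^ (-β) / (β * (1 - β))) := by
  set f2 : ℝ × ℝ → ℝ≥0∞ := fun q =>
    {q : ℝ × ℝ | d + q.1 < q.2}.indicator
      (fun q => ENNReal.ofReal (q.2 ^ (-(2:ℝ)) * (q.2 - q.1) ^ (-β))) q with hf2_def
  have hf2m : Measurable f2 := by
    apply Measurable.indicator _ (measurableSet_lt (by fun_prop) (by fun_prop))
    fun_prop
  have step1 : ∀ s : ℝ, (∫⁻ r in Ioi (d + s),
      ENNReal.ofReal (r ^ (-(2:ℝ)) * (r - s) ^ (-β))) = ∫⁻ r, f2 (s, r) := by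
    intro s
    rw [← lintegral_indicator measurableSet_Ioi]
    apply lintegral_congr
    intro r
    simp only [hf2_def, indicator, mem_Ioi, mem_setOf_eq]
  simp_rw [step1]
  rw [lintegral_lintegral_swap hf2m.aemeasurable]
  -- now for each r, estimate the inner integral over s
  have inner_bd : ∀ r : ℝ, (∫⁻ s in Ioo 0 t, f2 (s, r)) ≤
      (Ioi d).indicator (fun r => ENNReal.ofReal (r ^ (-(1:ℝ)-β) / (1 - β))) r := by
    intro r
    by_cases hr : r ≤ d
    · have : ∀ s ∈ Ioo (0:ℝ) t, f2 (s, r) = 0 := by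
        intro s hs
        apply indicator_of_notMem
        simp only [mem_setOf_eq, not_lt]
        linarith [hs.1]
      calc (∫⁻ s in Ioo 0 t, f2 (s, r)) = ∫⁻ s in Ioo 0 t, 0 :=
            setLIntegral_congr_fun measurableSet_Ioo (by intro s hs; exact this s hs)
        _ = 0 := lintegral_zero
        _ ≤ _ := zero_le
    · push_neg at hr
      set m := min t (r - d) with hm_def
      have hm0 : 0 < m := lt_min ht (by linarith)
      have hmt : m ≤ t := min_le_left _ _
      have hrm : d ≤ r - m := by
        have := min_le_right t (r - d)
        simp only [hm_def]
        linarith [this]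
      have hr0 : 0 < r := by linarith
      -- f2 (s, r) = indicator of s ∈ Iio (r - d)
      have hind : ∀ s : ℝ, f2 (s, r) =
          (Iio (r - d)).indicator (fun s => ENNReal.ofReal (r ^ (-(2:ℝ)) * (r - s) ^ (-β))) s := by
        intro s
        simp only [hf2_def, indicator, mem_setOf_eq, mem_Iio]
        congr 1
        simp only [eq_iff_iff]
        constructor <;> intro h <;> linarith
      calc (∫⁻ s in Ioo 0 t, f2 (s, r))
          = ∫⁻ s in Ioo 0 t ∩ Iio (r - d),
              ENNReal.ofReal (r ^ (-(2:ℝ)) * (r - s) ^ (-β)) := by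
            simp_rw [hind]
            rw [lintegral_indicator measurableSet_Iio, Measure.restrict_restrict measurableSet_Iio]
            rw [inter_comm]
        _ = ∫⁻ s in Ioo 0 m, ENNReal.ofReal (r ^ (-(2:ℝ)) * (r - s) ^ (-β)) := by
            have hset : Ioo 0 t ∩ Iio (r - d) = Ioo 0 m := by
              ext s
              simp only [mem_inter_iff, mem_Ioo, mem_Iio, hm_def, lt_min_iff]
              tauto
            rw [hset]
        _ = ENNReal.ofReal (r ^ (-(2:ℝ))) * ∫⁻ s in Ioo 0 m, ENNReal.ofReal ((r - s) ^ (-β)) := by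
            rw [← lintegral_const_mul' _ _ ENNReal.ofReal_ne_top]
            apply setLIntegral_congr_fun measurableSet_Ioo
            intro s hs
            dsimp only
            rw [← ENNReal.ofReal_mul (by positivity)]
        _ ≤ ENNReal.ofReal (r ^ (-(2:ℝ))) * ENNReal.ofReal (r ^ (1 - β) / (1 - β)) := by
            apply mul_le_mul_right
            -- compute the s integral
            have hcont : IntegrableOn (fun s => (r - s) ^ (-β)) (Ioo 0 m) volume := by
              apply (ContinuousOn.integrableOn_Icc ?_).mono_set Ioo_subset_Icc_self
              apply ContinuousOn.rpow_const
              · fun_prop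
              · intro s hs
                left
                have h1 : s ≤ m := hs.2
                exact ne_of_gt (by linarith [hrm, hd])
            rw [← ofReal_integral_eq_lintegral_ofReal hcont]
            · apply ENNReal.ofReal_le_ofReal
              rw [← MeasureTheory.integral_Ioc_eq_integral_Ioo,
                ← intervalIntegral.integral_of_le hm0.le,
                intervalIntegral.integral_comp_sub_left (fun x : ℝ => x ^ (-β)) r,
                integral_rpow (Or.inl (by linarith))]
              have h1 : (0:ℝ) ≤ (r - m) ^ ((1:ℝ) - β) := by
                apply Real.rpow_nonneg
                linarith
              rw [sub_zero, show -β + 1 = 1 - β by ring]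
              rw [div_le_div_iff₀ (by linarith) (by linarith)]
              nlinarith [mul_nonneg h1 (by linarith : (0:ℝ) ≤ 1 - β)]
            · filter_upwards [ae_restrict_mem measurableSet_Ioo] with s hs
              apply Real.rpow_nonneg
              have : s ≤ m := hs.2.le
              linarith [hrm]
        _ = (Ioi d).indicator (fun r => ENNReal.ofReal (r ^ (-(1:ℝ)-β) / (1 - β))) r := by
            rw [indicator_of_mem (mem_Ioi.mpr hr)]
            rw [← ENNReal.ofReal_mul (by positivity)]
            congr 1
            rw [← mul_div_assoc, ← Real.rpow_add hr0]
            ring_nf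
  calc (∫⁻ r, ∫⁻ s in Ioo 0 t, f2 (s, r))
      ≤ ∫⁻ r, (Ioi d).indicator (fun r => ENNReal.ofReal (r ^ (-(1:ℝ)-β) / (1 - β))) r :=
        lintegral_mono inner_bd
    _ = ∫⁻ r in Ioi d, ENNReal.ofReal (r ^ (-(1:ℝ)-β) / (1 - β)) :=
        lintegral_indicator measurableSet_Ioi _
    _ = ENNReal.ofReal (1 / (1 - β)) * ∫⁻ r in Ioi d, ENNReal.ofReal (r ^ (-(1:ℝ)-β)) := by
        rw [← lintegral_const_mul' _ _ ENNReal.ofReal_ne_top]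
        apply setLIntegral_congr_fun measurableSet_Ioi
        intro r hr
        dsimp only
        rw [← ENNReal.ofReal_mul (div_nonneg zero_le_one (by linarith))]
        congr 1
        ring
    _ = ENNReal.ofReal (1 / (1 - β)) * ENNReal.ofReal (d ^ (-β) / β) := by
        congr 1
        rw [← ofReal_integral_eq_lintegral_ofReal
          (integrableOn_Ioi_rpow_of_lt (by linarith) hd)]
        · congr 1
          rw [integral_Ioi_rpow_of_lt (by linarith) hd]
          rw [show -(1:ℝ) - β + 1 = -β by ring]
          rw [div_eq_div_iff (by linarith) (by linarith)]
          ring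
        · filter_upwards [ae_restrict_mem measurableSet_Ioi] with r hr
          exact Real.rpow_nonneg (by linarith [mem_Ioi.mp hr]) _
    _ = ENNReal.ofReal (d ^ (-β) / (β * (1 - β))) := by
        rw [← ENNReal.ofReal_mul (div_nonneg zero_le_one (by linarith))]
        congr 1
        field_simp

end AuxiliaryLemmas

section MainTheorem

open Real
open scoped Real ENNReal

set_option maxHeartbeats 1000000

/-- The estimate of the term `I₃` in the proof of Lemma `lm1`: if the forcing term satisfies
`|F(y,s)| ≤ B |y|^{-5/2} (|y| - s)^{-β}` whenever `s ≥ 0` and `|y| > R + s`, then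
`(1/(2π)) ∫₀^t ∫_{B(x,t-s)} |F(y,s)| / √((t-s)² - |y-x|²) dy ds ≤
  C B |x|^{-1/2} (|x| - t)^{-β}` whenever `t > 0` and `|x| > R + t`,
with `C` depending only on `β`. -/
theorem stmt_9 (β : ℝ) (hβ : 0 < β) (hβ' : β < 1 / 2) :
    ∃ C : ℝ, 0 < C ∧
      ∀ (R B : ℝ), 0 < R → 0 < B →
      ∀ F : EuclideanSpace ℝ (Fin 2) → ℝ → ℝ,
      Measurable (fun p : EuclideanSpace ℝ (Fin 2) × ℝ => F p.1 p.2) →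
      (∀ (y : EuclideanSpace ℝ (Fin 2)) (s : ℝ), 0 ≤ s → R + s < ‖y‖ →
        |F y s| ≤ B * ‖y‖ ^ (-(5 / 2) : ℝ) * (‖y‖ - s) ^ (-β)) →
      ∀ (t : ℝ) (x : EuclideanSpace ℝ (Fin 2)), 0 < t → R + t < ‖x‖ →
        ENNReal.ofReal (1 / (2 * Real.pi)) *
            ∫⁻ s in Set.Ioo 0 t, ∫⁻ y in Metric.ball x (t - s),
              ENNReal.ofReal (|F y s| / Real.sqrt ((t - s) ^ 2 - ‖y - x‖ ^ 2)) ≤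
          ENNReal.ofReal (C * B * ‖x‖ ^ (-(1 / 2) : ℝ) * (‖x‖ - t) ^ (-β)) := by
  have hπ := Real.pi_pos
  refine ⟨6 / (β * (1 - β)), div_pos (by norm_num) (by nlinarith), ?_⟩
  intro R B hR hB F _hFmeas hFbd t x ht hxt
  set a : ℝ := ‖x‖ with ha_def
  have ha0 : 0 < a := by linarith
  have hat : t < a := by linarith
  have hd : 0 < a - t := by linarith
  -- the measurable equivalence with ℝ × ℝ
  set e : EuclideanSpace ℝ (Fin 2) ≃ᵐ ℝ × ℝ :=
    (MeasurableEquiv.toLp 2 (Fin 2 → ℝ)).symm.trans (MeasurableEquiv.finTwoArrow) with he_def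
  have MP : MeasurePreserving e :=
    (volume_preserving_finTwoArrow ℝ).comp (EuclideanSpace.volume_preserving_symm_measurableEquiv_toLp (Fin 2))
  have hnorm : ∀ y : EuclideanSpace ℝ (Fin 2), ‖y‖ = Real.sqrt ((y 0)^2 + (y 1)^2) := by
    intro y
    rw [EuclideanSpace.norm_eq]
    simp [Fin.sum_univ_two, Real.norm_eq_abs, sq_abs]
  set x' : ℝ × ℝ := e x with hx'_def
  have ha' : Real.sqrt (x'.1 ^ 2 + x'.2 ^ 2) = a := (hnorm x).symm
  -- the inner estimate, for each s ∈ (0, t)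
  have hstep : ∀ s ∈ Ioo (0:ℝ) t,
      (∫⁻ y in Metric.ball x (t - s),
        ENNReal.ofReal (|F y s| / Real.sqrt ((t - s) ^ 2 - ‖y - x‖ ^ 2))) ≤
      ENNReal.ofReal (12 * π * B / Real.sqrt (2 * a)) *
        ∫⁻ r in Ioi ((a - t) + s), ENNReal.ofReal (r ^ (-(2 : ℝ)) * (r - s) ^ (-β)) := by
    intro s hsIoo
    obtain ⟨hs0, hst⟩ := hsIoo
    set u : ℝ := t - s with hu_def
    have hu : 0 < u := by simp only [hu_def]; linarith
    have hua : u < a := by simp only [hu_def]; linarith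
    have hsau : s < a - u := by simp only [hu_def]; linarith
    -- pointwise bound on the ball
    have hpoint : ∀ y ∈ Metric.ball x u,
        ENNReal.ofReal (|F y s| / Real.sqrt (u ^ 2 - ‖y - x‖ ^ 2)) ≤
        ENNReal.ofReal (B * ‖y‖ ^ (-(5 / 2) : ℝ) * (‖y‖ - s) ^ (-β) /
          Real.sqrt (u ^ 2 - ‖y - x‖ ^ 2)) := by
      intro y hy
      rw [mem_ball_iff_norm] at hy
      have hxy : a - u ≤ ‖y‖ := by
        have h1 := abs_norm_sub_norm_le y x
        rw [abs_le] at h1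
        linarith [h1.1]
      have hRy : R + s < ‖y‖ := by linarith
      have hF := hFbd y s hs0.le hRy
      apply ENNReal.ofReal_le_ofReal
      have hD : 0 < Real.sqrt (u ^ 2 - ‖y - x‖ ^ 2) := by
        apply Real.sqrt_pos.2
        have := pow_lt_pow_left₀ hy (norm_nonneg _) (by norm_num : 2 ≠ 0)
        linarith
      gcongr
    calc (∫⁻ y in Metric.ball x u,
          ENNReal.ofReal (|F y s| / Real.sqrt (u ^ 2 - ‖y - x‖ ^ 2)))
        ≤ ∫⁻ y in Metric.ball x u,
            ENNReal.ofReal (B * ‖y‖ ^ (-(5 / 2) : ℝ) * (‖y‖ - s) ^ (-β) /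
              Real.sqrt (u ^ 2 - ‖y - x‖ ^ 2)) :=
          setLIntegral_mono' measurableSet_ball hpoint
      _ = ∫⁻ p in {p : ℝ × ℝ | (p.1 - x'.1) ^ 2 + (p.2 - x'.2) ^ 2 < u ^ 2},
            ENNReal.ofReal (B * Real.sqrt (p.1 ^ 2 + p.2 ^ 2) ^ (-(5 / 2) : ℝ) *
                (Real.sqrt (p.1 ^ 2 + p.2 ^ 2) - s) ^ (-β) /
              Real.sqrt (u ^ 2 - ((p.1 - x'.1) ^ 2 + (p.2 - x'.2) ^ 2))) := by
          rw [← (MeasurePreserving.symm e MP).setLIntegral_comp_preimage_emb e.symm.measurableEmbedding]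
          have hset : e.symm ⁻¹' (Metric.ball x u) =
              {p : ℝ × ℝ | (p.1 - x'.1) ^ 2 + (p.2 - x'.2) ^ 2 < u ^ 2} := by
            ext p
            simp only [mem_preimage, mem_ball_iff_norm, mem_setOf_eq]
            rw [hnorm (e.symm p - x)]
            rw [show (e.symm p - x) 0 = p.1 - x'.1 from rfl,
              show (e.symm p - x) 1 = p.2 - x'.2 from rfl]
            exact Real.sqrt_lt' hu
          rw [hset]
          apply setLIntegral_congr_fun
            (measurableSet_lt (by fun_prop) measurable_const)
          intro p hp
          dsimp only
          rw [hnorm (e.symm p - x),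
            show (e.symm p - x) 0 = p.1 - x'.1 from rfl,
            show (e.symm p - x) 1 = p.2 - x'.2 from rfl,
            Real.sq_sqrt (by positivity),
            hnorm (e.symm p),
            show (e.symm p) 0 = p.1 from rfl, show (e.symm p) 1 = p.2 from rfl]
      _ ≤ ENNReal.ofReal (12 * π * B / Real.sqrt (2 * a)) *
            ∫⁻ r in Ioi (a - u), ENNReal.ofReal (r ^ (-(2 : ℝ)) * (r - s) ^ (-β)) :=
          inner_est x' ha' hu hua hs0.le hsau hB hβ
      _ = ENNReal.ofReal (12 * π * B / Real.sqrt (2 * a)) *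
            ∫⁻ r in Ioi ((a - t) + s), ENNReal.ofReal (r ^ (-(2 : ℝ)) * (r - s) ^ (-β)) := by
          rw [show a - u = (a - t) + s by simp only [hu_def]; ring]
  -- assemble
  have hmain : (∫⁻ s in Set.Ioo 0 t, ∫⁻ y in Metric.ball x (t - s),
      ENNReal.ofReal (|F y s| / Real.sqrt ((t - s) ^ 2 - ‖y - x‖ ^ 2))) ≤
      ENNReal.ofReal (12 * π * B / Real.sqrt (2 * a)) *
        ENNReal.ofReal ((a - t) ^ (-β) / (β * (1 - β))) := by
    calc (∫⁻ s in Set.Ioo 0 t, ∫⁻ y in Metric.ball x (t - s),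
        ENNReal.ofReal (|F y s| / Real.sqrt ((t - s) ^ 2 - ‖y - x‖ ^ 2)))
        ≤ ∫⁻ s in Set.Ioo 0 t, ENNReal.ofReal (12 * π * B / Real.sqrt (2 * a)) *
            ∫⁻ r in Ioi ((a - t) + s), ENNReal.ofReal (r ^ (-(2 : ℝ)) * (r - s) ^ (-β)) :=
          setLIntegral_mono' measurableSet_Ioo hstep
      _ = ENNReal.ofReal (12 * π * B / Real.sqrt (2 * a)) *
            ∫⁻ s in Set.Ioo 0 t, ∫⁻ r in Ioi ((a - t) + s),
              ENNReal.ofReal (r ^ (-(2 : ℝ)) * (r - s) ^ (-β)) :=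
          lintegral_const_mul' _ _ ENNReal.ofReal_ne_top
      _ ≤ ENNReal.ofReal (12 * π * B / Real.sqrt (2 * a)) *
            ENNReal.ofReal ((a - t) ^ (-β) / (β * (1 - β))) :=
          mul_le_mul_right (outer_est hβ (by linarith) ht hd) _
  calc ENNReal.ofReal (1 / (2 * Real.pi)) *
        ∫⁻ s in Set.Ioo 0 t, ∫⁻ y in Metric.ball x (t - s),
          ENNReal.ofReal (|F y s| / Real.sqrt ((t - s) ^ 2 - ‖y - x‖ ^ 2))
      ≤ ENNReal.ofReal (1 / (2 * Real.pi)) *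
          (ENNReal.ofReal (12 * π * B / Real.sqrt (2 * a)) *
            ENNReal.ofReal ((a - t) ^ (-β) / (β * (1 - β)))) :=
        mul_le_mul_right hmain _
    _ = ENNReal.ofReal (1 / (2 * π) * (12 * π * B / Real.sqrt (2 * a)) *
          ((a - t) ^ (-β) / (β * (1 - β)))) := by
        rw [← ENNReal.ofReal_mul (by positivity), ← ENNReal.ofReal_mul (by positivity)]
        congr 1
        ring
    _ ≤ ENNReal.ofReal (6 / (β * (1 - β)) * B * a ^ (-(1 / 2) : ℝ) * (a - t) ^ (-β)) := by
        apply ENNReal.ofReal_le_ofReal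
        have h2a : Real.sqrt a ≤ Real.sqrt (2 * a) := Real.sqrt_le_sqrt (by linarith)
        have hsa : (0:ℝ) < Real.sqrt a := Real.sqrt_pos.2 ha0
        have hs2a : (0:ℝ) < Real.sqrt (2 * a) := Real.sqrt_pos.2 (by linarith)
        have ha12 : a ^ (-(1 / 2) : ℝ) = 1 / Real.sqrt a := by
          rw [Real.rpow_neg ha0.le, Real.sqrt_eq_rpow, one_div]
          norm_num
        rw [ha12]
        have hL : 1 / (2 * π) * (12 * π * B / Real.sqrt (2 * a)) = 6 * B / Real.sqrt (2 * a) := by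
          field_simp
          ring
        rw [hL]
        have hre : 6 / (β * (1 - β)) * B * (1 / Real.sqrt a) * (a - t) ^ (-β) =
            6 * B / Real.sqrt a * ((a - t) ^ (-β) / (β * (1 - β))) := by
          field_simp
        rw [hre]
        apply mul_le_mul_of_nonneg_right _ (div_nonneg (Real.rpow_nonneg hd.le _) (by nlinarith))
        apply div_le_div_of_nonneg_left (by positivity) hsa h2a

end MainTheorem
end

section
/- Let t₀ ∈ ℝ and let w : {(r,t) : r > 0, t − t₀ > r} → ℝ be twice continuously differentiable and satisfy ∂ₜ²w − ∂ᵣ²w − (1/r)∂ᵣw = −|w|⁴w on this cone (the radial form of the quintic wave equation ∂ₜ²u − Δu = −|u|⁴u on ℝ²). Define v(s, τ) = e^{τ/2} · w(e^{τ} sinh s, t₀ + e^{τ} cosh s) for s > 0 and τ ∈ ℝ. Then v satisfies ∂_τ²v − ∂ₛ²v − (cosh s / sinh s) ∂ₛ v − (1/4) v = −|v|⁴v for all s > 0 and τ ∈ ℝ. -/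
open MeasureTheory Set

private lemma clm_eval (L : ℝ × ℝ →L[ℝ] ℝ) (a b : ℝ) :
    L (a, b) = a * L (1, 0) + b * L (0, 1) := by
  have h : (a, b) = a • ((1:ℝ),(0:ℝ)) + b • ((0:ℝ),(1:ℝ)) := by simp [Prod.ext_iff]
  rw [h, map_add, L.map_smul, L.map_smul]; simp

lemma quintic_alg (a E sh ch A0 A1 A2 B11 B12 B21 B22 : ℝ) (hsh : sh ≠ 0) (ha : a ≠ 0)
    (hE : E = a * a) (hch : ch ^ 2 = sh ^ 2 + 1)
    (hkey : B22 - B11 - 1 / (E * sh) * A1 = -(A0 ^ 4 * A0)) :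
    a * (1/2) * (1/2) * A0
        + a * (1/2) * (E * sh * A1 + E * ch * A2)
        + (a * (1/2) * (E * sh * A1 + E * ch * A2)
          + a * (E * sh * A1 + E * sh * (E * sh * B11 + E * ch * B12)
            + (E * ch * A2 + E * ch * (E * sh * B21 + E * ch * B22))))
      - (a * (E * sh * A1 + E * ch * (E * ch * B11 + E * sh * B12)
          + (E * ch * A2 + E * sh * (E * ch * B21 + E * sh * B22))))
      - ch / sh * (a * (E * ch * A1 + E * sh * A2))
      - 1 / 4 * (a * A0) = -((a * A0) ^ 4 * (a * A0)) := by
  subst hE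
  field_simp at hkey ⊢
  linear_combination (16*a^2) * hkey + (16*(a^4*sh*(B22-B11) - a^2*A1)) * hch

/-- Proposition 6.8 (`translation`, radial form): if `w(r,t)` solves the radial quintic wave
equation `∂ₜ²w - ∂ᵣ²w - (1/r)∂ᵣw = -|w|⁴w` in the forward light cone `{t - t₀ > r > 0}`,
then `v(s,τ) = e^{τ/2} w(e^τ sinh s, t₀ + e^τ cosh s)` solves the radial defocusing quintic
shifted wave equation `∂_τ²v - ∂ₛ²v - (cosh s/sinh s)∂ₛv - (1/4)v = -|v|⁴v` on `ℍ² × ℝ`. -/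
theorem stmt_12 (t₀ : ℝ) (w : ℝ → ℝ → ℝ)
    (hw : ContDiffOn ℝ 2 (fun p : ℝ × ℝ => w p.1 p.2)
      {p : ℝ × ℝ | 0 < p.1 ∧ p.1 < p.2 - t₀})
    (hpde : ∀ r t : ℝ, 0 < r → r < t - t₀ →
      deriv (deriv (w r)) t - deriv (fun r' => deriv (fun r'' => w r'' t) r') r
        - (1 / r) * deriv (fun r' => w r' t) r = -(|w r t| ^ 4 * w r t))
    (v : ℝ → ℝ → ℝ)
    (hv : ∀ s τ : ℝ, v s τ =
      Real.exp (τ / 2) * w (Real.exp τ * Real.sinh s) (t₀ + Real.exp τ * Real.cosh s)) :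
    ∀ s τ : ℝ, 0 < s →
      deriv (deriv (v s)) τ - deriv (fun s' => deriv (fun s'' => v s'' τ) s') s
        - (Real.cosh s / Real.sinh s) * deriv (fun s' => v s' τ) s
        - (1 / 4) * v s τ = -(|v s τ| ^ 4 * v s τ) := by
  intro s τ hs
  set F : ℝ × ℝ → ℝ := fun p => w p.1 p.2 with hFdef
  set U : Set (ℝ × ℝ) := {p : ℝ × ℝ | 0 < p.1 ∧ p.1 < p.2 - t₀} with hUdef
  have hU : IsOpen U := by
    have h1 : IsOpen {p : ℝ × ℝ | 0 < p.1} := isOpen_lt continuous_const continuous_fst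
    have h2 : IsOpen {p : ℝ × ℝ | p.1 < p.2 - t₀} :=
      isOpen_lt continuous_fst (continuous_snd.sub continuous_const)
    exact (h1.inter h2)
  set F₁ : ℝ × ℝ → ℝ := fun p => fderiv ℝ F p (1, 0) with hF1def
  set F₂ : ℝ × ℝ → ℝ := fun p => fderiv ℝ F p (0, 1) with hF2def
  have hC2 : ∀ p ∈ U, ContDiffAt ℝ 2 F p := fun p hp => hw.contDiffAt (hU.mem_nhds hp)
  have hC1' : ∀ p ∈ U, ContDiffAt ℝ 1 (fderiv ℝ F) p :=
    fun p hp => (hC2 p hp).fderiv_right (by norm_num)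
  have hFd : ∀ p ∈ U, HasFDerivAt F (fderiv ℝ F p) p :=
    fun p hp => ((hC2 p hp).differentiableAt (by norm_num)).hasFDerivAt
  have hF1d : ∀ p ∈ U, HasFDerivAt F₁ (fderiv ℝ F₁ p) p := fun p hp =>
    ((((hC1' p hp).differentiableAt one_ne_zero).clm_apply (differentiableAt_const _))).hasFDerivAt
  have hF2d : ∀ p ∈ U, HasFDerivAt F₂ (fderiv ℝ F₂ p) p := fun p hp =>
    ((((hC1' p hp).differentiableAt one_ne_zero).clm_apply (differentiableAt_const _))).hasFDerivAt
  -- partial derivatives helper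
  have hpart1 : ∀ (g : ℝ × ℝ → ℝ) (L : ℝ × ℝ →L[ℝ] ℝ) (p : ℝ × ℝ), HasFDerivAt g L p →
      HasDerivAt (fun x => g (x, p.2)) (L (1, 0)) p.1 := by
    intro g L p hg
    have h1 : HasDerivAt (fun x : ℝ => ((x, p.2) : ℝ × ℝ)) ((1:ℝ), (0:ℝ)) p.1 :=
      (hasDerivAt_id _).prodMk (hasDerivAt_const _ _)
    exact hg.comp_hasDerivAt p.1 h1
  have hpart2 : ∀ (g : ℝ × ℝ → ℝ) (L : ℝ × ℝ →L[ℝ] ℝ) (p : ℝ × ℝ), HasFDerivAt g L p →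
      HasDerivAt (fun y => g (p.1, y)) (L (0, 1)) p.2 := by
    intro g L p hg
    have h1 : HasDerivAt (fun y : ℝ => ((p.1, y) : ℝ × ℝ)) ((0:ℝ), (1:ℝ)) p.2 :=
      (hasDerivAt_const _ _).prodMk (hasDerivAt_id _)
    exact hg.comp_hasDerivAt p.2 h1
  -- rewrite the PDE in terms of F, F₁, F₂
  have hpde' : ∀ p ∈ U, fderiv ℝ F₂ p (0, 1) - fderiv ℝ F₁ p (1, 0)
      - (1 / p.1) * F₁ p = -((F p) ^ 4 * F p) := by
    rintro ⟨r, t⟩ ⟨hr, hrt⟩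
    have hpU : ((r, t) : ℝ × ℝ) ∈ U := ⟨hr, hrt⟩
    have key := hpde r t hr (by linarith)
    have e1 : deriv (fun r' => w r' t) r = F₁ (r, t) :=
      (hpart1 F _ (r, t) (hFd _ hpU)).deriv
    -- second derivative in t
    have hNt : ∀ᶠ t' in nhds t, ((r, t') : ℝ × ℝ) ∈ U := by
      have hc : ContinuousAt (fun t' : ℝ => ((r, t') : ℝ × ℝ)) t :=
        (continuous_const.prodMk continuous_id).continuousAt
      exact hc.eventually_mem (hU.mem_nhds hpU)
    have e2 : deriv (w r) =ᶠ[nhds t] fun t' => F₂ (r, t') := by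
      filter_upwards [hNt] with t' ht'
      exact (hpart2 F _ (r, t') (hFd _ ht')).deriv
    have e3 : deriv (deriv (w r)) t = fderiv ℝ F₂ (r, t) (0, 1) := by
      rw [e2.deriv_eq]
      exact (hpart2 F₂ _ (r, t) (hF2d _ hpU)).deriv
    -- second derivative in r
    have hNr : ∀ᶠ r' in nhds r, ((r', t) : ℝ × ℝ) ∈ U := by
      have hc : ContinuousAt (fun r' : ℝ => ((r', t) : ℝ × ℝ)) r :=
        (continuous_id.prodMk continuous_const).continuousAt
      exact hc.eventually_mem (hU.mem_nhds hpU)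
    have e4 : (fun r' => deriv (fun r'' => w r'' t) r') =ᶠ[nhds r] fun r' => F₁ (r', t) := by
      filter_upwards [hNr] with r' hr'
      exact (hpart1 F _ (r', t) (hFd _ hr')).deriv
    have e5 : deriv (fun r' => deriv (fun r'' => w r'' t) r') r = fderiv ℝ F₁ (r, t) (1, 0) := by
      rw [e4.deriv_eq]
      exact (hpart1 F₁ _ (r, t) (hF1d _ hpU)).deriv
    rw [e1, e3, e5] at key
    have habs : |w r t| ^ 4 = (w r t) ^ 4 := Even.pow_abs (⟨2, rfl⟩ : Even 4) _
    rw [habs] at key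
    exact key

  -- the curve stays in the cone
  have hmem : ∀ s' τ' : ℝ, 0 < s' →
      ((Real.exp τ' * Real.sinh s', t₀ + Real.exp τ' * Real.cosh s') : ℝ × ℝ) ∈ U := by
    intro s' τ' hs'
    have h1 : 0 < Real.exp τ' * Real.sinh s' := mul_pos (Real.exp_pos τ') (Real.sinh_pos_iff.2 hs')
    have h2 : Real.sinh s' < Real.cosh s' := Real.sinh_lt_cosh s'
    have := mul_lt_mul_of_pos_left h2 (Real.exp_pos τ')
    refine ⟨h1, ?_⟩
    show Real.exp τ' * Real.sinh s' < t₀ + Real.exp τ' * Real.cosh s' - t₀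
    linarith
  -- derivatives of the change of variables
  have hφτ : ∀ s' τ' : ℝ, HasDerivAt
      (fun τ'' => ((Real.exp τ'' * Real.sinh s', t₀ + Real.exp τ'' * Real.cosh s') : ℝ × ℝ))
      (Real.exp τ' * Real.sinh s', Real.exp τ' * Real.cosh s') τ' := by
    intro s' τ'
    have h := ((Real.hasDerivAt_exp τ').mul_const (Real.sinh s')).prodMk
      ((hasDerivAt_const τ' t₀).add ((Real.hasDerivAt_exp τ').mul_const (Real.cosh s')))
    simpa using h
  have hφs : ∀ s' τ' : ℝ, HasDerivAt
      (fun s'' => ((Real.exp τ' * Real.sinh s'', t₀ + Real.exp τ' * Real.cosh s'') : ℝ × ℝ))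
      (Real.exp τ' * Real.cosh s', Real.exp τ' * Real.sinh s') s' := by
    intro s' τ'
    have h := ((Real.hasDerivAt_sinh s').const_mul (Real.exp τ')).prodMk
      ((hasDerivAt_const s' t₀).add ((Real.hasDerivAt_cosh s').const_mul (Real.exp τ')))
    simpa using h
  have hexp2 : ∀ τ' : ℝ, HasDerivAt (fun τ'' : ℝ => Real.exp (τ''/2))
      (Real.exp (τ'/2) * (1/2)) τ' := by
    intro τ'
    have h := (Real.hasDerivAt_exp (τ'/2)).comp τ' ((hasDerivAt_id τ').div_const 2)
    simpa [Function.comp_def] using h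
  -- first derivative in τ
  have hGτ : ∀ τ' : ℝ, HasDerivAt
      (fun τ'' => F (Real.exp τ'' * Real.sinh s, t₀ + Real.exp τ'' * Real.cosh s))
      (Real.exp τ' * Real.sinh s *
          F₁ (Real.exp τ' * Real.sinh s, t₀ + Real.exp τ' * Real.cosh s)
        + Real.exp τ' * Real.cosh s *
          F₂ (Real.exp τ' * Real.sinh s, t₀ + Real.exp τ' * Real.cosh s)) τ' := by
    intro τ'
    have h := (hFd _ (hmem s τ' hs)).comp_hasDerivAt τ' (hφτ s τ')
    rw [clm_eval] at h
    exact h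
  have hvτ : ∀ τ' : ℝ, HasDerivAt (v s)
      (Real.exp (τ'/2) * (1/2) *
          F (Real.exp τ' * Real.sinh s, t₀ + Real.exp τ' * Real.cosh s)
        + Real.exp (τ'/2) * (Real.exp τ' * Real.sinh s *
            F₁ (Real.exp τ' * Real.sinh s, t₀ + Real.exp τ' * Real.cosh s)
          + Real.exp τ' * Real.cosh s *
            F₂ (Real.exp τ' * Real.sinh s, t₀ + Real.exp τ' * Real.cosh s))) τ' := by
    intro τ'
    have hvs : v s = fun τ'' =>
        Real.exp (τ''/2) * F (Real.exp τ'' * Real.sinh s, t₀ + Real.exp τ'' * Real.cosh s) :=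
      funext fun τ'' => hv s τ''
    rw [hvs]
    exact (hexp2 τ').mul (hGτ τ')
  have hderiv_vs : deriv (v s) = fun τ' =>
      Real.exp (τ'/2) * (1/2) *
          F (Real.exp τ' * Real.sinh s, t₀ + Real.exp τ' * Real.cosh s)
        + Real.exp (τ'/2) * (Real.exp τ' * Real.sinh s *
            F₁ (Real.exp τ' * Real.sinh s, t₀ + Real.exp τ' * Real.cosh s)
          + Real.exp τ' * Real.cosh s *
            F₂ (Real.exp τ' * Real.sinh s, t₀ + Real.exp τ' * Real.cosh s)) :=
    funext fun τ' => (hvτ τ').deriv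
  -- derivatives of F₁, F₂ along the curve (τ direction)
  have hF1τ : HasDerivAt
      (fun τ' => F₁ (Real.exp τ' * Real.sinh s, t₀ + Real.exp τ' * Real.cosh s))
      (Real.exp τ * Real.sinh s *
          fderiv ℝ F₁ (Real.exp τ * Real.sinh s, t₀ + Real.exp τ * Real.cosh s) (1, 0)
        + Real.exp τ * Real.cosh s *
          fderiv ℝ F₁ (Real.exp τ * Real.sinh s, t₀ + Real.exp τ * Real.cosh s) (0, 1)) τ := by
    have h := (hF1d _ (hmem s τ hs)).comp_hasDerivAt τ (hφτ s τ)
    rw [clm_eval] at h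
    exact h
  have hF2τ : HasDerivAt
      (fun τ' => F₂ (Real.exp τ' * Real.sinh s, t₀ + Real.exp τ' * Real.cosh s))
      (Real.exp τ * Real.sinh s *
          fderiv ℝ F₂ (Real.exp τ * Real.sinh s, t₀ + Real.exp τ * Real.cosh s) (1, 0)
        + Real.exp τ * Real.cosh s *
          fderiv ℝ F₂ (Real.exp τ * Real.sinh s, t₀ + Real.exp τ * Real.cosh s) (0, 1)) τ := by
    have h := (hF2d _ (hmem s τ hs)).comp_hasDerivAt τ (hφτ s τ)
    rw [clm_eval] at h
    exact h
  -- second derivative in τ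
  have hD2τ := (((hexp2 τ).mul_const (1/2)).mul (hGτ τ)).add ((hexp2 τ).mul
    ((((Real.hasDerivAt_exp τ).mul_const (Real.sinh s)).mul hF1τ).add
      (((Real.hasDerivAt_exp τ).mul_const (Real.cosh s)).mul hF2τ)))
  have H2τ : deriv (deriv (v s)) τ =
      Real.exp (τ/2) * (1/2) * (1/2) * F (Real.exp τ * Real.sinh s, t₀ + Real.exp τ * Real.cosh s)
        + Real.exp (τ/2) * (1/2) * (Real.exp τ * Real.sinh s * F₁ (Real.exp τ * Real.sinh s, t₀ + Real.exp τ * Real.cosh s)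
            + Real.exp τ * Real.cosh s * F₂ (Real.exp τ * Real.sinh s, t₀ + Real.exp τ * Real.cosh s))
        + (Real.exp (τ/2) * (1/2) * (Real.exp τ * Real.sinh s * F₁ (Real.exp τ * Real.sinh s, t₀ + Real.exp τ * Real.cosh s)
              + Real.exp τ * Real.cosh s * F₂ (Real.exp τ * Real.sinh s, t₀ + Real.exp τ * Real.cosh s))
          + Real.exp (τ/2) * (Real.exp τ * Real.sinh s * F₁ (Real.exp τ * Real.sinh s, t₀ + Real.exp τ * Real.cosh s)
              + Real.exp τ * Real.sinh s * (Real.exp τ * Real.sinh s * fderiv ℝ F₁ (Real.exp τ * Real.sinh s, t₀ + Real.exp τ * Real.cosh s) (1, 0)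
                + Real.exp τ * Real.cosh s * fderiv ℝ F₁ (Real.exp τ * Real.sinh s, t₀ + Real.exp τ * Real.cosh s) (0, 1))
            + (Real.exp τ * Real.cosh s * F₂ (Real.exp τ * Real.sinh s, t₀ + Real.exp τ * Real.cosh s)
              + Real.exp τ * Real.cosh s * (Real.exp τ * Real.sinh s * fderiv ℝ F₂ (Real.exp τ * Real.sinh s, t₀ + Real.exp τ * Real.cosh s) (1, 0)
                + Real.exp τ * Real.cosh s * fderiv ℝ F₂ (Real.exp τ * Real.sinh s, t₀ + Real.exp τ * Real.cosh s) (0, 1))))) := by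
    rw [hderiv_vs]
    exact hD2τ.deriv
  -- derivatives in the s direction
  have hGs : ∀ s' : ℝ, 0 < s' → HasDerivAt
      (fun s'' => F (Real.exp τ * Real.sinh s'', t₀ + Real.exp τ * Real.cosh s''))
      (Real.exp τ * Real.cosh s' *
          F₁ (Real.exp τ * Real.sinh s', t₀ + Real.exp τ * Real.cosh s')
        + Real.exp τ * Real.sinh s' *
          F₂ (Real.exp τ * Real.sinh s', t₀ + Real.exp τ * Real.cosh s')) s' := by
    intro s' hs'
    have h := (hFd _ (hmem s' τ hs')).comp_hasDerivAt s' (hφs s' τ)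
    rw [clm_eval] at h
    exact h
  have hvσ : ∀ s' : ℝ, 0 < s' → HasDerivAt (fun s'' => v s'' τ)
      (Real.exp (τ/2) * (Real.exp τ * Real.cosh s' *
          F₁ (Real.exp τ * Real.sinh s', t₀ + Real.exp τ * Real.cosh s')
        + Real.exp τ * Real.sinh s' *
          F₂ (Real.exp τ * Real.sinh s', t₀ + Real.exp τ * Real.cosh s'))) s' := by
    intro s' hs'
    have hfun : (fun s'' => v s'' τ) = fun s'' =>
        Real.exp (τ/2) * F (Real.exp τ * Real.sinh s'', t₀ + Real.exp τ * Real.cosh s'') :=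
      funext fun s'' => hv s'' τ
    rw [hfun]
    exact (hGs s' hs').const_mul (Real.exp (τ/2))
  have Hs : deriv (fun s' => v s' τ) s = Real.exp (τ/2) * (Real.exp τ * Real.cosh s * F₁ (Real.exp τ * Real.sinh s, t₀ + Real.exp τ * Real.cosh s)
      + Real.exp τ * Real.sinh s * F₂ (Real.exp τ * Real.sinh s, t₀ + Real.exp τ * Real.cosh s)) := (hvσ s hs).deriv
  have hF1s : HasDerivAt
      (fun s' => F₁ (Real.exp τ * Real.sinh s', t₀ + Real.exp τ * Real.cosh s'))
      (Real.exp τ * Real.cosh s * fderiv ℝ F₁ (Real.exp τ * Real.sinh s, t₀ + Real.exp τ * Real.cosh s) (1, 0)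
        + Real.exp τ * Real.sinh s * fderiv ℝ F₁ (Real.exp τ * Real.sinh s, t₀ + Real.exp τ * Real.cosh s) (0, 1)) s := by
    have h := (hF1d _ (hmem s τ hs)).comp_hasDerivAt s (hφs s τ)
    rw [clm_eval] at h
    exact h
  have hF2s : HasDerivAt
      (fun s' => F₂ (Real.exp τ * Real.sinh s', t₀ + Real.exp τ * Real.cosh s'))
      (Real.exp τ * Real.cosh s * fderiv ℝ F₂ (Real.exp τ * Real.sinh s, t₀ + Real.exp τ * Real.cosh s) (1, 0)
        + Real.exp τ * Real.sinh s * fderiv ℝ F₂ (Real.exp τ * Real.sinh s, t₀ + Real.exp τ * Real.cosh s) (0, 1)) s := by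
    have h := (hF2d _ (hmem s τ hs)).comp_hasDerivAt s (hφs s τ)
    rw [clm_eval] at h
    exact h
  have hDss := ((((Real.hasDerivAt_cosh s).const_mul (Real.exp τ)).mul hF1s).add
    (((Real.hasDerivAt_sinh s).const_mul (Real.exp τ)).mul hF2s)).const_mul
    (Real.exp (τ/2))
  have hev : (fun s' => deriv (fun s'' => v s'' τ) s') =ᶠ[nhds s] fun s' =>
      Real.exp (τ/2) * (Real.exp τ * Real.cosh s' *
          F₁ (Real.exp τ * Real.sinh s', t₀ + Real.exp τ * Real.cosh s')
        + Real.exp τ * Real.sinh s' *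
          F₂ (Real.exp τ * Real.sinh s', t₀ + Real.exp τ * Real.cosh s')) := by
    filter_upwards [isOpen_Ioi.eventually_mem hs] with s' hs'
    exact (hvσ s' hs').deriv
  have Hss : deriv (fun s' => deriv (fun s'' => v s'' τ) s') s =
      Real.exp (τ/2) * (Real.exp τ * Real.sinh s * F₁ (Real.exp τ * Real.sinh s, t₀ + Real.exp τ * Real.cosh s)
          + Real.exp τ * Real.cosh s * (Real.exp τ * Real.cosh s * fderiv ℝ F₁ (Real.exp τ * Real.sinh s, t₀ + Real.exp τ * Real.cosh s) (1, 0)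
            + Real.exp τ * Real.sinh s * fderiv ℝ F₁ (Real.exp τ * Real.sinh s, t₀ + Real.exp τ * Real.cosh s) (0, 1))
        + (Real.exp τ * Real.cosh s * F₂ (Real.exp τ * Real.sinh s, t₀ + Real.exp τ * Real.cosh s)
          + Real.exp τ * Real.sinh s * (Real.exp τ * Real.cosh s * fderiv ℝ F₂ (Real.exp τ * Real.sinh s, t₀ + Real.exp τ * Real.cosh s) (1, 0)
            + Real.exp τ * Real.sinh s * fderiv ℝ F₂ (Real.exp τ * Real.sinh s, t₀ + Real.exp τ * Real.cosh s) (0, 1)))) := by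
    rw [hev.deriv_eq]
    exact hDss.deriv
  -- put everything together
  have hvst : v s τ = Real.exp (τ/2) * F (Real.exp τ * Real.sinh s, t₀ + Real.exp τ * Real.cosh s) := hv s τ
  have hkey : fderiv ℝ F₂ (Real.exp τ * Real.sinh s, t₀ + Real.exp τ * Real.cosh s) (0, 1) - fderiv ℝ F₁ (Real.exp τ * Real.sinh s, t₀ + Real.exp τ * Real.cosh s) (1, 0)
      - 1 / (Real.exp τ * Real.sinh s) * F₁ (Real.exp τ * Real.sinh s, t₀ + Real.exp τ * Real.cosh s) = -(F (Real.exp τ * Real.sinh s, t₀ + Real.exp τ * Real.cosh s) ^ 4 * F (Real.exp τ * Real.sinh s, t₀ + Real.exp τ * Real.cosh s)) :=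
    hpde' (Real.exp τ * Real.sinh s, t₀ + Real.exp τ * Real.cosh s) (hmem s τ hs)
  have habs : |Real.exp (τ/2) * F (Real.exp τ * Real.sinh s, t₀ + Real.exp τ * Real.cosh s)| ^ 4 = (Real.exp (τ/2) * F (Real.exp τ * Real.sinh s, t₀ + Real.exp τ * Real.cosh s)) ^ 4 :=
    Even.pow_abs (⟨2, rfl⟩ : Even 4) _
  rw [H2τ, Hss, Hs, hvst, habs]
  have hE : Real.exp τ = Real.exp (τ/2) * Real.exp (τ/2) := by
    rw [← Real.exp_add]; ring_nf
  have hsh : Real.sinh s ≠ 0 := ne_of_gt (Real.sinh_pos_iff.2 hs)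
  have hch : Real.cosh s ^ 2 = Real.sinh s ^ 2 + 1 := Real.cosh_sq s
  exact quintic_alg _ _ _ _ _ _ _ _ _ _ _ hsh (Real.exp_ne_zero _) hE hch hkey
end
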